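/- arXiv:2101.05264 — 11 statements merged into one kernel-verified Lean document; each statement's English description precedes it below -/
import Mathlib

section
/- Let D be a strongly connected tournament, let r be a ray in D, and let v be a vertex of D not in the image of r. Then v can be inserted into r, i.e. there exist a ray r' of D and natural numbers i, k such that r' n = r n for all n < i, r' (n + k) = r n for all n ≥ i, and v lies in the image of r'. -/
open Classical

theorem insert_seg {V : Type*} (E : V → V → Prop)
    (r : ℕ → V) (h_inj : Function.Injective r)
    (h_ray : ∀ n : ℕ, E (r n) (r (n + 1)))
    (i k : ℕ) (hk : 0 < k) (q : ℕ → V)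
    (hq_range : ∀ t, t < k → q t ∉ Set.range r)
    (hq_inj : ∀ a b, a < k → b < k → q a = q b → a = b)
    (hq_edge : ∀ t, t + 1 < k → E (q t) (q (t + 1)))
    (hq_last : E (q (k - 1)) (r i))
    (hq_first : ∀ j, i = j + 1 → E (r j) (q 0)) :
    ∃ r' : ℕ → V,
      Function.Injective r' ∧ (∀ n, E (r' n) (r' (n + 1))) ∧
      (∀ n, n < i → r' n = r n) ∧ (∀ n, i ≤ n → r' (n + k) = r n) ∧
      (∀ t, t < k → r' (i + t) = q t) := by
  set r' : ℕ → V := fun n => if n < i then r n else if n < i + k then q (n - i) else r (n - k) with hr'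
  have h1 : ∀ n, n < i → r' n = r n := by intro n hn; simp [hr', hn]
  have h2 : ∀ t, t < k → r' (i + t) = q t := by
    intro t ht
    have : ¬ i + t < i := by omega
    simp only [hr', this, if_false, if_pos (by omega : i + t < i + k)]
    congr 1; omega
  have h3 : ∀ n, i ≤ n → r' (n + k) = r n := by
    intro n hn
    have h4 : ¬ n + k < i := by omega
    have h5 : ¬ n + k < i + k := by omega
    simp only [hr', h4, if_false, h5, if_false]
    congr 1; omega
  refine ⟨r', ?_, ?_, h1, h3, h2⟩
  · -- injectivity
    have key : ∀ n, (n < i ∧ r' n = r n) ∨ (i ≤ n ∧ n < i + k ∧ r' n = q (n - i)) ∨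
        (i + k ≤ n ∧ r' n = r (n - k)) := by
      intro n
      rcases lt_or_ge n i with h | h
      · exact Or.inl ⟨h, by simp [hr', h]⟩
      rcases lt_or_ge n (i + k) with h' | h'
      · exact Or.inr (Or.inl ⟨h, h', by simp [hr', h', not_lt.mpr h]⟩)
      · exact Or.inr (Or.inr ⟨h', by simp [hr', not_lt.mpr h, not_lt.mpr h']⟩)
    intro a b hab
    rcases key a with ⟨ha, ea⟩ | ⟨ha1, ha2, ea⟩ | ⟨ha, ea⟩ <;>
      rcases key b with ⟨hb, eb⟩ | ⟨hb1, hb2, eb⟩ | ⟨hb, eb⟩ <;>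
      rw [ea, eb] at hab
    · exact h_inj hab
    · exact absurd ⟨a, hab⟩ (hq_range _ (by omega))
    · have := h_inj hab; omega
    · exact absurd ⟨b, hab.symm⟩ (hq_range _ (by omega))
    · have := hq_inj _ _ (by omega) (by omega) hab; omega
    · exact absurd ⟨b - k, hab.symm⟩ (hq_range _ (by omega))
    · have := h_inj hab; omega
    · exact absurd ⟨a - k, hab⟩ (hq_range _ (by omega))
    · have := h_inj hab; omega
  · -- edges
    intro n
    rcases lt_or_ge (n + 1) i with h | h
    · rw [h1 n (by omega), h1 (n + 1) h]; exact h_ray n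
    rcases eq_or_lt_of_le h with h' | h'
    · rw [h1 n (by omega)]
      have e : r' (n + 1) = q 0 := by have := h2 0 hk; rw [Nat.add_zero] at this; rw [← h']; exact this
      rw [e]
      exact hq_first n h'
    rcases lt_or_ge (n + 1) (i + k) with h'' | h''
    · have e1 : r' n = q (n - i) := by
        have := h2 (n - i) (by omega); rwa [Nat.add_sub_cancel' (by omega : i ≤ n)] at this
      have e2 : r' (n + 1) = q (n - i + 1) := by
        have := h2 (n - i + 1) (by omega)
        rwa [show i + (n - i + 1) = n + 1 by omega] at this
      rw [e1, e2]
      exact hq_edge _ (by omega)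
    rcases eq_or_lt_of_le h'' with h3' | h3'
    · have e1 : r' n = q (k - 1) := by
        have := h2 (k - 1) (by omega)
        rwa [show i + (k - 1) = n by omega] at this
      have e2 : r' (n + 1) = r i := by
        have := h3 i le_rfl; rwa [show i + k = n + 1 by omega] at this
      rw [e1, e2]; exact hq_last
    · have e1 : r' n = r (n - k) := by
        have := h3 (n - k) (by omega); rwa [show n - k + k = n by omega] at this
      have e2 : r' (n + 1) = r (n - k + 1) := by
        have := h3 (n - k + 1) (by omega); rwa [show n - k + 1 + k = n + 1 by omega] at this
      rw [e1, e2]; exact h_ray _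

theorem stmt_0 {V : Type*} (E : V → V → Prop)
    (h_irr : ∀ v : V, ¬ E v v)
    (h_tour : ∀ u v : V, u ≠ v → Xor' (E u v) (E v u))
    (h_sc : ∀ u v : V, Relation.ReflTransGen E u v)
    (r : ℕ → V) (h_inj : Function.Injective r)
    (h_ray : ∀ n : ℕ, E (r n) (r (n + 1)))
    (v : V) (hv : v ∉ Set.range r) :
    ∃ (r' : ℕ → V) (i k : ℕ),
      Function.Injective r' ∧ (∀ n : ℕ, E (r' n) (r' (n + 1))) ∧
      (∀ n : ℕ, n < i → r' n = r n) ∧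
      (∀ n : ℕ, i ≤ n → r' (n + k) = r n) ∧
      v ∈ Set.range r' := by
  classical
  have beats : ∀ n, ¬ E v (r n) → E (r n) v := by
    intro n hn
    have hne : v ≠ r n := fun h => hv ⟨n, h.symm⟩
    rcases h_tour v (r n) hne with ⟨h1, _⟩ | ⟨h2, _⟩
    · exact absurd h1 hn
    · exact h2
  by_cases hcase : ∃ n, E v (r n)
  · set n := Nat.find hcase with hn
    have hvn : E v (r n) := Nat.find_spec hcase
    obtain ⟨r', hinj, hedge, hpre, hshift, hmem⟩ :=
      insert_seg E r h_inj h_ray n 1 one_pos (fun _ => v)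
        (fun t _ => hv)
        (fun a b ha hb _ => by omega)
        (fun t ht => absurd ht (by omega))
        (by simpa using hvn)
        (fun j hj => beats j (Nat.find_min hcase (by omega)))
    exact ⟨r', n, 1, hinj, hedge, hpre, hshift, ⟨n + 0, hmem 0 one_pos⟩⟩
  · have hall : ∀ n, E (r n) v := fun n => beats n (fun h => hcase ⟨n, h⟩)
    have hex : ∃ L, ∃ p : ℕ → V, p 0 = v ∧ (∀ t, t < L → E (p t) (p (t + 1))) ∧
        (∀ t, t < L → p t ∉ Set.range r) ∧ p L ∈ Set.range r := by
      have gen : ∀ u : V, Relation.ReflTransGen E u (r 0) →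
          ∃ L, ∃ p : ℕ → V, p 0 = u ∧ (∀ t, t < L → E (p t) (p (t + 1))) ∧
          (∀ t, t < L → p t ∉ Set.range r) ∧ p L ∈ Set.range r := by
        intro u hu
        induction hu using Relation.ReflTransGen.head_induction_on with
        | refl => exact ⟨0, fun _ => r 0, rfl, fun t ht => by omega, fun t ht => by omega, ⟨0, rfl⟩⟩
        | head hstep _ ih =>
          rename_i a c _
          by_cases ha : a ∈ Set.range r
          · exact ⟨0, fun _ => a, rfl, fun t ht => by omega, fun t ht => by omega, ha⟩
          · obtain ⟨L, p, hp0, hpe, hpr, hpL⟩ := ih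
            refine ⟨L + 1, fun t => if t = 0 then a else p (t - 1), rfl, ?_, ?_, ?_⟩
            · intro t ht
              rcases Nat.eq_zero_or_pos t with h | h
              · subst h
                simp only [if_pos rfl, if_neg (by omega : (0:ℕ) + 1 ≠ 0)]
                simpa [hp0] using hstep
              · simp only [if_neg (show ¬ t = 0 by omega), if_neg (show ¬ t + 1 = 0 by omega),
                  show t + 1 - 1 = t - 1 + 1 by omega]
                exact hpe _ (by omega)
            · intro t ht
              rcases Nat.eq_zero_or_pos t with h | h
              · subst h; simpa using ha
              · simp only [if_neg (show ¬ t = 0 by omega)]; exact hpr _ (by omega)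
            · simp only [if_neg (show ¬ L + 1 = 0 by omega)]
              simpa using hpL
      exact gen v (h_sc v (r 0))
    set L := Nat.find hex with hL
    obtain ⟨p, hp0, hpe, hpr, hpL⟩ := Nat.find_spec hex
    have hL1 : 0 < L := by
      rcases Nat.eq_zero_or_pos L with h | h
      · exfalso; apply hv; rw [← hp0, ← h]; exact hpL
      · exact h
    obtain ⟨m, hm⟩ := hpL
    have hqinj : ∀ a b, a < L → b < L → p a = p b → a = b := by
      suffices aux : ∀ a b, a < b → b < L → p a ≠ p b by
        intro a b ha hb heq
        rcases lt_trichotomy a b with h | h | h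
        · exact absurd heq (aux _ _ h hb)
        · exact h
        · exact absurd heq.symm (aux _ _ h ha)
      intro a b hab hbL heq
      apply Nat.find_min hex (show L - (b - a) < L by omega)
      refine ⟨fun t => if t ≤ a then p t else p (t + (b - a)), ?_, ?_, ?_, ?_⟩
      · simp only [if_pos (Nat.zero_le a)]; exact hp0
      · intro t ht
        rcases lt_trichotomy t a with h | h | h
        · simp only [if_pos (show t ≤ a by omega), if_pos (show t + 1 ≤ a by omega)]
          exact hpe t (by omega)
        · subst h
          simp only [if_pos le_rfl, if_neg (show ¬ t + 1 ≤ t by omega), heq,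
            show t + 1 + (b - t) = b + 1 by omega]
          exact hpe b (by omega)
        · simp only [if_neg (show ¬ t ≤ a by omega), if_neg (show ¬ t + 1 ≤ a by omega),
            show t + 1 + (b - a) = t + (b - a) + 1 by omega]
          exact hpe _ (by omega)
      · intro t ht
        by_cases h : t ≤ a
        · simp only [if_pos h]; exact hpr t (by omega)
        · simp only [if_neg h]; exact hpr _ (by omega)
      · simp only [if_neg (show ¬ L - (b - a) ≤ a by omega),
          show L - (b - a) + (b - a) = L by omega]
        exact ⟨m, hm⟩
    obtain ⟨r', hinj, hedge, hpre, hshift, hmem⟩ :=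
      insert_seg E r h_inj h_ray m L hL1 p hpr hqinj
        (fun t ht => hpe t (by omega))
        (by
          have h1 := hpe (L - 1) (by omega)
          rw [show L - 1 + 1 = L by omega] at h1
          rwa [hm])
        (fun j _ => by rw [hp0]; exact hall j)
    exact ⟨r', m, L, hinj, hedge, hpre, hshift, ⟨m + 0, by rw [hmem 0 hL1, hp0]⟩⟩
end

section
/- Let D be a strongly connected tournament, let r be a reverse ray in D, and let v be a vertex of D not in the image of r. Then v can be inserted into r, i.e. there exist a reverse ray r' of D and natural numbers i, k such that r' n = r n for all n < i, r' (n + k) = r n for all n ≥ i, and v lies in the image of r'. -/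
/-- From a chain starting at an off-ray vertex that eventually meets the ray, extract a
simple chain whose interior avoids the ray and which ends at the first ray vertex met. -/
private lemma find_exit {V : Type*} (E : V → V → Prop) (r : ℕ → V) :
    ∀ (l : List V) (a : V), a ∉ Set.range r → List.Chain E a l →
      (∃ x ∈ l, x ∈ Set.range r) →
      ∃ (p : List V) (j : ℕ), List.Chain E a (p ++ [r j]) ∧ (a :: p).Nodup ∧
        ∀ x ∈ a :: p, x ∉ Set.range r := by
  intro l
  induction l with
  | nil =>
    rintro a _ _ ⟨x, hx, _⟩
    simp at hx
  | cons b t ih =>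
    intro a ha hchain hex
    change List.IsChain E (a :: b :: t) at hchain
    rw [List.chain_cons] at hchain
    obtain ⟨hab, hbt⟩ := hchain
    by_cases hb : b ∈ Set.range r
    · obtain ⟨j, hj⟩ := hb
      refine ⟨[], j, ?_, by simp, by simpa using ha⟩
      show List.IsChain E (a :: ([] ++ [r j]))
      simp only [List.nil_append, List.chain_cons]
      exact ⟨hj ▸ hab, List.Chain.nil⟩
    · have hex' : ∃ x ∈ t, x ∈ Set.range r := by
        obtain ⟨x, hx, hxr⟩ := hex
        rcases List.mem_cons.mp hx with h | h
        · exact absurd (h ▸ hxr) hb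
        · exact ⟨x, h, hxr⟩
      obtain ⟨p, j, hc, hnd, hoff⟩ := ih b hb hbt hex'
      by_cases hmem : a ∈ b :: p
      · obtain ⟨t1, t2, hsplit⟩ := List.append_of_mem hmem
        have hsuffix : a :: t2 <:+ b :: p := ⟨t1, hsplit.symm⟩
        have hchain' : List.Chain' E (t1 ++ (a :: (t2 ++ [r j]))) := by
          have h0 : List.Chain' E ((b :: p) ++ [r j]) := hc
          rw [hsplit] at h0
          simpa [List.append_assoc] using h0
        have hsuf : List.Chain' E (a :: (t2 ++ [r j])) := hchain'.right_of_append
        refine ⟨t2, j, hsuf, hnd.sublist hsuffix.sublist, ?_⟩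
        intro x hx
        exact hoff x (hsuffix.sublist.subset hx)
      · refine ⟨b :: p, j, ?_, ?_, ?_⟩
        · show List.IsChain E (a :: (b :: p ++ [r j]))
          rw [List.cons_append, List.chain_cons]
          exact ⟨hab, hc⟩
        · exact List.nodup_cons.mpr ⟨hmem, hnd⟩
        · intro x hx
          rcases List.mem_cons.mp hx with h | h
          · exact h ▸ ha
          · exact hoff x h

/-- Given a nonempty simple list `M` of off-ray vertices forming a reverse chain, with an
edge from `r i` into its last element and (if `i > 0`) from its head to `r (i-1)`,
insert `M` into the reverse ray between positions `i-1` and `i`. -/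
private lemma insert_list {V : Type*} (E : V → V → Prop) (r : ℕ → V) (v : V)
    (h_inj : Function.Injective r) (h_ray : ∀ n : ℕ, E (r (n + 1)) (r n))
    (M : List V) (i : ℕ) (hne : M ≠ [])
    (hnd : M.Nodup) (hoff : ∀ x ∈ M, x ∉ Set.range r)
    (hchain : M.Chain' (flip E))
    (htop : E (r i) (M.getLast hne))
    (hbot : ∀ j, i = j + 1 → E (M.head hne) (r j))
    (hvm : v ∈ M) :
    ∃ (r' : ℕ → V) (i' k : ℕ),
      Function.Injective r' ∧ (∀ n : ℕ, E (r' (n + 1)) (r' n)) ∧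
      (∀ n : ℕ, n < i' → r' n = r n) ∧
      (∀ n : ℕ, i' ≤ n → r' (n + k) = r n) ∧
      v ∈ Set.range r' := by
  set k := M.length with hkdef
  have hk : 0 < k := List.length_pos_iff.mpr hne
  set c : ℕ → V := fun m => M.getD m v with hcdef
  have hcget : ∀ m (hm : m < k), c m = M[m] := fun m hm => List.getD_eq_getElem M v hm
  have hcm : ∀ m, m < k → c m ∈ M := by
    intro m hm
    rw [hcget m hm]
    exact List.getElem_mem hm
  have hcoff : ∀ m, m < k → c m ∉ Set.range r := fun m hm => hoff _ (hcm m hm)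
  have hcinj : ∀ m1, m1 < k → ∀ m2, m2 < k → c m1 = c m2 → m1 = m2 := by
    intro m1 h1 m2 h2 h
    rw [hcget m1 h1, hcget m2 h2] at h
    exact (hnd.getElem_inj_iff).mp h
  have hcc : ∀ m, m + 1 < k → E (c (m + 1)) (c m) := by
    intro m hm
    have h1 : m < k := by omega
    have h2 : m < M.length - 1 := by omega
    have := List.isChain_iff_getElem.mp hchain m (by omega)
    rw [hcget m h1, hcget (m + 1) hm]
    simpa [List.get_eq_getElem, flip] using this
  have htop' : E (r i) (c (k - 1)) := by
    have : M.getLast hne = c (k - 1) := by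
      rw [hcget (k - 1) (by omega)]
      exact List.getLast_eq_getElem hne
    rwa [this] at htop
  have hbot' : ∀ j, i = j + 1 → E (c 0) (r j) := by
    intro j hj
    have : M.head hne = c 0 := by
      rw [hcget 0 hk]
      exact List.head_eq_getElem_zero hne
    rw [← this]
    exact hbot j hj
  obtain ⟨m0, hm0, hm0v⟩ : ∃ m, m < k ∧ c m = v := by
    obtain ⟨⟨m, hm⟩, h⟩ := List.mem_iff_get.mp hvm
    exact ⟨m, hm, by rw [hcget m hm]; exact h⟩
  refine ⟨fun n => if n < i then r n else if n < i + k then c (n - i) else r (n - k),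
    i, k, ?_, ?_, ?_, ?_, ?_⟩
  · -- injectivity
    intro a b hab
    simp only at hab
    by_cases ha1 : a < i <;> by_cases hb1 : b < i
    · rw [if_pos ha1, if_pos hb1] at hab; exact h_inj hab
    · rw [if_pos ha1, if_neg hb1] at hab
      by_cases hb2 : b < i + k
      · rw [if_pos hb2] at hab
        exact absurd ⟨a, hab⟩ (hcoff (b - i) (by omega))
      · rw [if_neg hb2] at hab
        have := h_inj hab
        omega
    · rw [if_neg ha1, if_pos hb1] at hab
      by_cases ha2 : a < i + k
      · rw [if_pos ha2] at hab
        exact absurd ⟨b, hab.symm⟩ (hcoff (a - i) (by omega))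
      · rw [if_neg ha2] at hab
        have := h_inj hab
        omega
    · rw [if_neg ha1, if_neg hb1] at hab
      by_cases ha2 : a < i + k <;> by_cases hb2 : b < i + k
      · rw [if_pos ha2, if_pos hb2] at hab
        have := hcinj (a - i) (by omega) (b - i) (by omega) hab
        omega
      · rw [if_pos ha2, if_neg hb2] at hab
        exact absurd ⟨b - k, hab.symm⟩ (hcoff (a - i) (by omega))
      · rw [if_neg ha2, if_pos hb2] at hab
        exact absurd ⟨a - k, hab⟩ (hcoff (b - i) (by omega))
      · rw [if_neg ha2, if_neg hb2] at hab
        have := h_inj hab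
        omega
  · -- edges
    intro n
    simp only
    by_cases h1 : n + 1 < i
    · rw [if_pos h1, if_pos (by omega : n < i)]
      exact h_ray n
    · by_cases h2 : n < i
      · -- n + 1 = i
        have hni : i = n + 1 := by omega
        rw [if_neg h1, if_pos (by omega : n + 1 < i + k), if_pos h2]
        have : n + 1 - i = 0 := by omega
        rw [this]
        exact hbot' n hni
      · by_cases h3 : n + 1 < i + k
        · rw [if_neg h1, if_neg h2, if_pos h3, if_pos (by omega : n < i + k)]
          have : n + 1 - i = (n - i) + 1 := by omega
          rw [this]
          exact hcc (n - i) (by omega)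
        · by_cases h4 : n < i + k
          · -- n + 1 = i + k
            rw [if_neg h1, if_neg h3, if_neg h2, if_pos h4]
            have e1 : n + 1 - k = i := by omega
            have e2 : n - i = k - 1 := by omega
            rw [e1, e2]
            exact htop'
          · rw [if_neg h1, if_neg h3, if_neg (by omega : ¬ n < i), if_neg h4]
            have : n + 1 - k = (n - k) + 1 := by omega
            rw [this]
            exact h_ray (n - k)
  · intro n hn
    simp only [if_pos hn]
  · intro n hn
    simp only [if_neg (by omega : ¬ n + k < i), if_neg (by omega : ¬ n + k < i + k)]
    congr 1
    omega
  · exact ⟨i + m0, by simp only [if_neg (by omega : ¬ i + m0 < i),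
      if_pos (by omega : i + m0 < i + k)]; rw [(by omega : i + m0 - i = m0)]; exact hm0v⟩

theorem stmt_1 {V : Type*} (E : V → V → Prop)
    (h_irr : ∀ v : V, ¬ E v v)
    (h_tour : ∀ u v : V, u ≠ v → Xor' (E u v) (E v u))
    (h_sc : ∀ u v : V, Relation.ReflTransGen E u v)
    (r : ℕ → V) (h_inj : Function.Injective r)
    (h_ray : ∀ n : ℕ, E (r (n + 1)) (r n))
    (v : V) (hv : v ∉ Set.range r) :
    ∃ (r' : ℕ → V) (i k : ℕ),
      Function.Injective r' ∧ (∀ n : ℕ, E (r' (n + 1)) (r' n)) ∧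
      (∀ n : ℕ, n < i → r' n = r n) ∧
      (∀ n : ℕ, i ≤ n → r' (n + k) = r n) ∧
      v ∈ Set.range r' := by
  have hvr : ∀ n, v ≠ r n := fun n h => hv ⟨n, h.symm⟩
  by_cases h0 : E (r 0) v
  · -- insert v at the very bottom
    refine insert_list E r v h_inj h_ray [v] 0 (by simp) (by simp)
      (by simpa using hv) (List.IsChain.singleton v) (by simpa using h0) (by omega) (by simp)
  by_cases hA : ∃ n, E v (r n) ∧ E (r (n + 1)) v
  · obtain ⟨n, hv1, hv2⟩ := hA
    refine insert_list E r v h_inj h_ray [v] (n + 1) (by simp) (by simp)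
      (by simpa using hv) (List.IsChain.singleton v) (by simpa using hv2) ?_ (by simp)
    intro j hj
    have : j = n := by omega
    subst this
    simpa using hv1
  · push_neg at hA
    have hall : ∀ n, E v (r n) := by
      intro n
      induction n with
      | zero =>
        rcases h_tour v (r 0) (hvr 0) with ⟨h, _⟩ | ⟨h, _⟩
        · exact h
        · exact absurd h h0
      | succ n ihn =>
        have hnot : ¬ E (r (n + 1)) v := hA n ihn
        rcases h_tour v (r (n + 1)) (hvr (n + 1)) with ⟨h, _⟩ | ⟨h, _⟩
        · exact h
        · exact absurd h hnot
    -- path from r 0 to v, reversed goes from v to r 0 under the swapped relation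
    have hswap : Relation.ReflTransGen (Function.swap E) v (r 0) :=
      Relation.reflTransGen_swap.mpr (h_sc (r 0) v)
    obtain ⟨l, hl, hlast⟩ := List.exists_isChain_cons_of_relationReflTransGen hswap
    have hlne : l ≠ [] := by
      rintro rfl
      exact hvr 0 (by simpa using hlast)
    have hex : ∃ x ∈ l, x ∈ Set.range r := by
      refine ⟨l.getLast hlne, List.getLast_mem hlne, 0, ?_⟩
      rw [← hlast]
      exact List.getLast_cons hlne
    obtain ⟨p, j, hc, hnd, hoff⟩ := find_exit (Function.swap E) r l v hv hl hex
    have hc' : List.IsChain (Function.swap E) ((v :: p) ++ [r j]) := hc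
    rw [List.isChain_append] at hc'
    obtain ⟨hc1, _, hjunc⟩ := hc'
    refine insert_list E r v h_inj h_ray (v :: p) j (by simp) hnd hoff hc1 ?_ ?_ (by simp)
    · exact hjunc _ (List.getLast?_eq_getLast (by simp)) _ rfl
    · intro j' hj'
      subst hj'
      simpa using hall j'
end

section
/- Let D be a strongly connected tournament, let w be a double ray in D, and let v be a vertex of D not in the image of w such that v has finite in-degree (the set {u : E u v} is finite) or finite out-degree (the set {u : E v u} is finite). Then v can be inserted into w, i.e. there exist a double ray w' of D, an integer i and a natural number k such that w' n = w n for all n < i, w' (n + k) = w n for all n ≥ i, and v lies in the image of w'. -/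
-- extract a finite path from ReflTransGen
lemma rtg_path {V : Type*} {E : V → V → Prop} {a b : V} (h : Relation.ReflTransGen E a b) :
    ∃ (m : ℕ) (c : ℕ → V), c 0 = a ∧ c m = b ∧ ∀ j < m, E (c j) (c (j+1)) := by
  induction h with
  | refl => exact ⟨0, fun _ => a, rfl, rfl, fun j hj => absurd hj (by omega)⟩
  | @tail x y hax hxy ih =>
    obtain ⟨m, c, h0, hm, hch⟩ := ih
    refine ⟨m + 1, fun j => if j ≤ m then c j else y, by simp [h0], by simp, ?_⟩
    intro j hj
    by_cases h1 : j + 1 ≤ m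
    · show E (if j ≤ m then c j else y) (if j + 1 ≤ m then c (j+1) else y)
      rw [if_pos (by omega : j ≤ m), if_pos h1]
      exact hch j (by omega)
    · have hjm : j = m := by omega
      subst hjm
      show E (if j ≤ j then c j else y) (if j + 1 ≤ j then c (j+1) else y)
      rw [if_pos le_rfl, if_neg (by omega : ¬ j + 1 ≤ j), hm]
      exact hxy

-- a minimal path from the ray to v: internal vertices off-ray and distinct
lemma lemA {V : Type*} (E : V → V → Prop) (w : ℤ → V) (v : V)
    (hv : v ∉ Set.range w) (hsc : Relation.ReflTransGen E (w 0) v) :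
    ∃ (m : ℕ) (n : ℤ) (c : ℕ → V), 1 ≤ m ∧ c 0 = w n ∧ c m = v ∧
      (∀ j < m, E (c j) (c (j+1))) ∧
      (∀ j, 1 ≤ j → j ≤ m → c j ∉ Set.range w) ∧
      (∀ j1 j2, 1 ≤ j1 → j1 ≤ m → 1 ≤ j2 → j2 ≤ m → c j1 = c j2 → j1 = j2) := by
  classical
  set P : ℕ → Prop := fun m => ∃ (n : ℤ) (c : ℕ → V),
    c 0 = w n ∧ c m = v ∧ ∀ j < m, E (c j) (c (j+1)) with hP
  have hex : ∃ m, P m := by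
    obtain ⟨m, c, h0, hm, hch⟩ := rtg_path hsc
    exact ⟨m, 0, c, h0, hm, hch⟩
  obtain ⟨n, c, h0, hm, hch⟩ : P (Nat.find hex) := Nat.find_spec hex
  set m0 := Nat.find hex with hm0def
  have hmin : ∀ m < m0, ¬ P m := fun m hm => Nat.find_min hex hm
  have hm1 : 1 ≤ m0 := by
    by_contra h
    have hm0 : m0 = 0 := by omega
    rw [hm0] at hm
    exact hv ⟨n, by rw [← h0, hm]⟩
  -- off-ray
  have hoff : ∀ j, 1 ≤ j → j ≤ m0 → c j ∉ Set.range w := by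
    intro j hj1 hjm ⟨n', hn'⟩
    by_cases hje : j = m0
    · exact hv ⟨n', by rw [hn', hje, hm]⟩
    · have hjlt : j < m0 := by omega
      apply hmin (m0 - j) (by omega)
      refine ⟨n', fun t => c (t + j), ?_, ?_, ?_⟩
      · show c (0 + j) = w n'
        rw [Nat.zero_add, hn']
      · show c (m0 - j + j) = v
        rw [show m0 - j + j = m0 from by omega, hm]
      · intro t ht
        show E (c (t + j)) (c (t + 1 + j))
        rw [show t + 1 + j = t + j + 1 from by omega]
        exact hch (t + j) (by omega)
  -- injectivity on [1, m0]
  have key : ∀ j1 j2, 1 ≤ j1 → j1 < j2 → j2 ≤ m0 → c j1 = c j2 → False := by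
    intro j1 j2 hj1 hlt hj2 heq
    set δ := j2 - j1 with hδ
    apply hmin (m0 - δ) (by omega)
    refine ⟨n, fun t => if t ≤ j1 then c t else c (t + δ), ?_, ?_, ?_⟩
    · show (if 0 ≤ j1 then c 0 else c (0 + δ)) = w n
      rw [if_pos (by omega : 0 ≤ j1), h0]
    · show (if m0 - δ ≤ j1 then c (m0 - δ) else c (m0 - δ + δ)) = v
      by_cases hE : m0 - δ ≤ j1
      · have h1 : m0 - δ = j1 := by omega
        have h2 : j2 = m0 := by omega
        rw [if_pos hE, h1, heq, h2, hm]
      · rw [if_neg hE, show m0 - δ + δ = m0 from by omega, hm]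
    · intro t ht
      show E (if t ≤ j1 then c t else c (t + δ)) (if t + 1 ≤ j1 then c (t+1) else c (t + 1 + δ))
      by_cases h1 : t + 1 ≤ j1
      · rw [if_pos (by omega : t ≤ j1), if_pos h1]
        exact hch t (by omega)
      · by_cases h2 : t ≤ j1
        · have ht1 : t = j1 := by omega
          rw [if_pos h2, if_neg h1, ht1, heq, show j1 + 1 + δ = j2 + 1 from by omega]
          exact hch j2 (by omega)
        · rw [if_neg h2, if_neg (by omega : ¬ t + 1 ≤ j1),
            show t + 1 + δ = t + δ + 1 from by omega]
          exact hch (t + δ) (by omega)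
  refine ⟨m0, n, c, hm1, h0, hm, hch, hoff, ?_⟩
  intro j1 j2 h1 h2 h3 h4 heq
  rcases lt_trichotomy j1 j2 with h | h | h
  · exact absurd (key j1 j2 h1 h h4 heq) (by simp)
  · exact h
  · exact absurd (key j2 j1 h3 h h2 heq.symm) (by simp)

-- inserting a chain of k new vertices into w just before position i
lemma insert_lemma {V : Type*} (E : V → V → Prop)
    (w : ℤ → V) (h_inj : Function.Injective w)
    (h_ray : ∀ n : ℤ, E (w n) (w (n + 1)))
    (v : V)
    (i : ℤ) (k : ℕ) (hk : 1 ≤ k) (d : ℕ → V)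
    (hentry : E (w (i-1)) (d 0))
    (hexit : E (d (k-1)) (w i))
    (hchain : ∀ j : ℕ, j + 1 < k → E (d j) (d (j+1)))
    (hoff : ∀ j < k, d j ∉ Set.range w)
    (hdinj : ∀ j1 < k, ∀ j2 < k, d j1 = d j2 → j1 = j2)
    (hvd : ∃ j < k, v = d j) :
    ∃ (w' : ℤ → V) (i' : ℤ) (k' : ℕ),
      Function.Injective w' ∧ (∀ n : ℤ, E (w' n) (w' (n + 1))) ∧
      (∀ n : ℤ, n < i' → w' n = w n) ∧
      (∀ n : ℤ, i' ≤ n → w' (n + (k' : ℤ)) = w n) ∧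
      v ∈ Set.range w' := by
  set w' : ℤ → V := fun n => if n < i then w n else if n < i + k then d (n - i).toNat else w (n - k)
    with hw'
  have hval1 : ∀ n : ℤ, n < i → w' n = w n := by
    intro n hn
    show (if n < i then w n else _) = w n
    rw [if_pos hn]
  have hval2 : ∀ n : ℤ, i ≤ n → n < i + k → w' n = d (n - i).toNat := by
    intro n h1 h2
    show (if n < i then w n else if n < i + k then d (n - i).toNat else w (n - k)) = _
    rw [if_neg (by omega), if_pos h2]
  have hval3 : ∀ n : ℤ, i + k ≤ n → w' n = w (n - k) := by
    intro n h1
    show (if n < i then w n else if n < i + k then d (n - i).toNat else w (n - k)) = _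
    rw [if_neg (by omega), if_neg (by omega)]
  have regions : ∀ a : ℤ, a < i ∨ (i ≤ a ∧ a < i + k) ∨ i + k ≤ a := fun a => by omega
  refine ⟨w', i, k, ?_, ?_, hval1, ?_, ?_⟩
  · -- injectivity
    intro a b hab
    rcases regions a with ha | ⟨ha1, ha2⟩ | ha <;> rcases regions b with hb | ⟨hb1, hb2⟩ | hb
    · rw [hval1 a ha, hval1 b hb] at hab; exact h_inj hab
    · rw [hval1 a ha, hval2 b hb1 hb2] at hab
      exact absurd ⟨a, hab⟩ (hoff _ (by omega))
    · rw [hval1 a ha, hval3 b hb] at hab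
      have := h_inj hab; omega
    · rw [hval2 a ha1 ha2, hval1 b hb] at hab
      exact absurd ⟨b, hab.symm⟩ (hoff _ (by omega))
    · rw [hval2 a ha1 ha2, hval2 b hb1 hb2] at hab
      have := hdinj _ (by omega) _ (by omega) hab; omega
    · rw [hval2 a ha1 ha2, hval3 b hb] at hab
      exact absurd ⟨b - k, hab.symm⟩ (hoff _ (by omega))
    · rw [hval3 a ha, hval1 b hb] at hab
      have := h_inj hab; omega
    · rw [hval3 a ha, hval2 b hb1 hb2] at hab
      exact absurd ⟨a - k, hab⟩ (hoff _ (by omega))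
    · rw [hval3 a ha, hval3 b hb] at hab
      have := h_inj hab; omega
  · -- edges
    intro n
    rcases lt_trichotomy (n + 1) i with h1 | h1 | h1
    · rw [hval1 n (by omega), hval1 (n+1) h1]; exact h_ray n
    · rw [hval1 n (by omega), hval2 (n+1) (by omega) (by omega)]
      rw [show ((n + 1 - i).toNat) = 0 from by omega, show n = i - 1 from by omega]
      exact hentry
    · rcases lt_trichotomy (n + 1) (i + k) with h2 | h2 | h2
      · rw [hval2 n (by omega) (by omega), hval2 (n+1) (by omega) h2]
        rw [show (n + 1 - i).toNat = (n - i).toNat + 1 from by omega]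
        exact hchain _ (by omega)
      · rw [hval2 n (by omega) (by omega), hval3 (n+1) (by omega)]
        rw [show (n - i).toNat = k - 1 from by omega, show n + 1 - k = i from by omega]
        exact hexit
      · rw [hval3 n (by omega), hval3 (n+1) (by omega)]
        rw [show n + 1 - k = n - k + 1 from by ring]
        exact h_ray (n - k)
  · intro n hn
    rw [hval3 (n + k) (by omega)]
    congr 1; ring
  · obtain ⟨j, hj, hvj⟩ := hvd
    refine ⟨i + j, ?_⟩
    rw [hval2 (i + j) (by omega) (by omega),
      show (i + j - i).toNat = j from by omega]
    exact hvj.symm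

theorem stmt_2 {V : Type*} (E : V → V → Prop)
    (h_irr : ∀ v : V, ¬ E v v)
    (h_tour : ∀ u v : V, u ≠ v → Xor' (E u v) (E v u))
    (h_sc : ∀ u v : V, Relation.ReflTransGen E u v)
    (w : ℤ → V) (h_inj : Function.Injective w)
    (h_ray : ∀ n : ℤ, E (w n) (w (n + 1)))
    (v : V) (hv : v ∉ Set.range w)
    (h_deg : {u : V | E u v}.Finite ∨ {u : V | E v u}.Finite) :
    ∃ (w' : ℤ → V) (i : ℤ) (k : ℕ),
      Function.Injective w' ∧ (∀ n : ℤ, E (w' n) (w' (n + 1))) ∧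
      (∀ n : ℤ, n < i → w' n = w n) ∧
      (∀ n : ℤ, i ≤ n → w' (n + (k : ℤ)) = w n) ∧
      v ∈ Set.range w' := by
  have hdir : ∀ n : ℤ, E (w n) v ∨ E v (w n) := by
    intro n
    have hne : w n ≠ v := fun h => hv ⟨n, h⟩
    rcases h_tour (w n) v hne with ⟨h, _⟩ | ⟨h, _⟩
    · exact Or.inl h
    · exact Or.inr h
  by_cases hcase1 : ∃ n : ℤ, E (w n) v ∧ E v (w (n+1))
  · obtain ⟨n, hn1, hn2⟩ := hcase1
    exact insert_lemma E w h_inj h_ray v (n+1) 1 le_rfl (fun _ => v)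
      (by rwa [show n + 1 - 1 = n from by ring]) hn2
      (fun j hj => absurd hj (by omega))
      (fun j _ => hv)
      (fun j1 h1 j2 h2 _ => by omega)
      ⟨0, by omega, rfl⟩
  by_cases hall_out : ∀ n : ℤ, E v (w n)
  · obtain ⟨m, n, c, hm1, h0, hm, hch, hoff, hcinj⟩ := lemA E w v hv (h_sc (w 0) v)
    refine insert_lemma E w h_inj h_ray v (n+1) m hm1 (fun j => c (j+1))
      ?_ ?_ (fun j hj => hch (j+1) (by omega))
      (fun j hj => hoff (j+1) (by omega) (by omega))
      (fun j1 h1 j2 h2 he => by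
        have := hcinj (j1+1) (j2+1) (by omega) (by omega) (by omega) (by omega) he; omega)
      ⟨m - 1, by omega, by
        show v = c (m - 1 + 1)
        rw [show m - 1 + 1 = m from by omega, hm]⟩
    · rw [show n + 1 - 1 = n from by ring, ← h0]
      exact hch 0 (by omega)
    · show E (c (m - 1 + 1)) (w (n+1))
      rw [show m - 1 + 1 = m from by omega, hm]
      exact hall_out (n+1)
  by_cases hall_in : ∀ n : ℤ, E (w n) v
  · -- reverse: path from v to the ray
    have hsc2 : Relation.ReflTransGen (Function.swap E) ((fun n : ℤ => w (-n)) 0) v := by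
      show Relation.ReflTransGen (Function.swap E) (w (-0)) v
      rw [neg_zero]
      exact (Relation.reflTransGen_swap).mpr (h_sc v (w 0))
    have hv2 : v ∉ Set.range (fun n : ℤ => w (-n)) := by
      rintro ⟨n, hn⟩; exact hv ⟨-n, hn⟩
    obtain ⟨m, n, c, hm1, h0, hm, hch, hoff, hcinj⟩ :=
      lemA (Function.swap E) (fun n : ℤ => w (-n)) v hv2 hsc2
    have h0' : c 0 = w (-n) := h0
    refine insert_lemma E w h_inj h_ray v (-n) m hm1 (fun j => c (m - j))
      ?_ ?_ ?_ ?_ ?_ ⟨0, by omega, by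
        show v = c (m - 0)
        rw [Nat.sub_zero, hm]⟩
    · show E (w (-n - 1)) (c (m - 0))
      rw [Nat.sub_zero, hm]
      exact hall_in (-n - 1)
    · show E (c (m - (m - 1))) (w (-n))
      have := hch 0 (by omega)
      rw [show m - (m - 1) = 1 from by omega, ← h0']
      exact this
    · intro j hj
      show E (c (m - j)) (c (m - (j + 1)))
      have := hch (m - j - 1) (by omega)
      rw [show m - j - 1 + 1 = m - j from by omega] at this
      rw [show m - (j + 1) = m - j - 1 from by omega]
      exact this
    · intro j hj hmem
      apply hoff (m - j) (by omega) (by omega)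
      obtain ⟨n', hn'⟩ := hmem
      exact ⟨-n', by simpa using hn'⟩
    · intro j1 h1 j2 h2 he
      have := hcinj (m - j1) (m - j2) (by omega) (by omega) (by omega) (by omega) he
      omega
  · -- contradiction with h_deg
    exfalso
    push_neg at hall_out hall_in
    obtain ⟨n1, hn1⟩ := hall_out
    obtain ⟨n2, hn2⟩ := hall_in
    have hup : ∀ j : ℕ, E (w (n1 + j)) v := by
      intro j
      induction j with
      | zero => simpa using (hdir n1).resolve_right hn1
      | succ j ih =>
        have hnot : ¬ E v (w (n1 + j + 1)) := fun h => hcase1 ⟨n1 + j, ih, h⟩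
        have h2 := (hdir (n1 + j + 1)).resolve_right hnot
        have he : n1 + ((j + 1 : ℕ) : ℤ) = n1 + (j : ℤ) + 1 := by push_cast; ring
        rwa [he]
    have hdown : ∀ j : ℕ, E v (w (n2 - j)) := by
      intro j
      induction j with
      | zero => simpa using (hdir n2).resolve_left hn2
      | succ j ih =>
        by_contra hnot
        have he : n2 - ((j + 1 : ℕ) : ℤ) = n2 - (j : ℤ) - 1 := by push_cast; ring
        rw [he] at hnot
        have h1 : E (w (n2 - j - 1)) v := (hdir (n2 - j - 1)).resolve_right hnot
        exact hcase1 ⟨n2 - j - 1, h1, by rwa [show n2 - j - 1 + 1 = n2 - j from by ring]⟩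
    rcases h_deg with hfin | hfin
    · exact (Set.infinite_of_injective_forall_mem
        (f := fun j : ℕ => w (n1 + j)) (fun a b hab => by
          have := h_inj hab; omega) hup) hfin
    · exact (Set.infinite_of_injective_forall_mem
        (f := fun j : ℕ => w (n2 - j)) (fun a b hab => by
          have := h_inj hab; omega) hdown) hfin
end

section
/- Every solid tournament on a nonempty vertex type has a vertex that can reach every other vertex. -/
/-- Mutual reachability in `D − X`: `u` and `v` lie in the same strong component
of the restriction of `E` to the complement of `X`. -/
def SameComp {V : Type*} (E : V → V → Prop) (X : Set V) (u v : V) : Prop :=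
  Relation.ReflTransGen (fun a b => a ∉ X ∧ b ∉ X ∧ E a b) u v ∧
  Relation.ReflTransGen (fun a b => a ∉ X ∧ b ∉ X ∧ E a b) v u

/-- A digraph is solid if deleting any finite vertex set leaves only finitely many
strong components. -/
def IsSolid {V : Type*} (E : V → V → Prop) : Prop :=
  ∀ X : Set V, X.Finite →
    {C : Set V | ∃ v, v ∉ X ∧ C = {u | u ∉ X ∧ SameComp E X u v}}.Finite

/-- A finite nonempty set with a total, reflexive, transitive relation has an
element related to everything. -/
lemma exists_top_aux {V : Type*} (R : V → V → Prop) (hrefl : ∀ v, R v v)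
    (htrans : ∀ {a b c}, R a b → R b c → R a c)
    (htot : ∀ u v, R u v ∨ R v u) (s : Finset V) (hs : s.Nonempty) :
    ∃ v ∈ s, ∀ w ∈ s, R v w := by
  classical
  induction s using Finset.induction_on with
  | empty => exact absurd hs (by simp)
  | @insert a s ha ih =>
    by_cases hse : s.Nonempty
    · obtain ⟨v, hv, hvall⟩ := ih hse
      rcases htot v a with h | h
      · exact ⟨v, Finset.mem_insert_of_mem hv, fun w hw => by
          rcases Finset.mem_insert.1 hw with rfl | hw
          · exact h
          · exact hvall w hw⟩
      · exact ⟨a, Finset.mem_insert_self a s, fun w hw => by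
          rcases Finset.mem_insert.1 hw with rfl | hw
          · exact hrefl _
          · exact htrans h (hvall w hw)⟩
    · have : s = ∅ := Finset.not_nonempty_iff_eq_empty.1 hse
      subst this
      exact ⟨a, Finset.mem_insert_self a ∅, fun w hw => by
        rcases Finset.mem_insert.1 hw with rfl | hw
        · exact hrefl _
        · simp at hw⟩

theorem stmt_3 {V : Type*} [Nonempty V] (E : V → V → Prop)
    (h_irr : ∀ v : V, ¬ E v v)
    (h_tour : ∀ u v : V, u ≠ v → Xor' (E u v) (E v u))
    (h_solid : IsSolid E) :
    ∃ v : V, ∀ w : V, Relation.ReflTransGen E v w := by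
  classical
  set R := Relation.ReflTransGen E with hR
  have hrefl : ∀ v, R v v := fun v => Relation.ReflTransGen.refl
  have htrans : ∀ {a b c : V}, R a b → R b c → R a c :=
    fun hab hbc => hab.trans hbc
  have htot : ∀ u v : V, R u v ∨ R v u := by
    intro u v
    by_cases huv : u = v
    · subst huv; exact Or.inl (hrefl u)
    · rcases (h_tour u v huv) with ⟨h, _⟩ | ⟨h, _⟩
      · exact Or.inl (Relation.ReflTransGen.single h)
      · exact Or.inr (Relation.ReflTransGen.single h)
  -- components with X = ∅
  set f : V → Set V := fun v => {u | u ∉ (∅ : Set V) ∧ SameComp E ∅ u v} with hf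
  have hrange : (Set.range f).Finite := by
    refine (h_solid ∅ Set.finite_empty).subset ?_
    rintro C ⟨v, rfl⟩
    exact ⟨v, Set.notMem_empty v, rfl⟩
  -- representatives
  set g : Set V → V := fun C =>
    if h : ∃ v, C = f v then h.choose else Classical.arbitrary V with hg
  set W : Finset V := hrange.toFinset.image g with hW
  have hWne : W.Nonempty := by
    obtain ⟨v0⟩ := ‹Nonempty V›
    exact ⟨g (f v0), Finset.mem_image_of_mem g (by simp [Set.Finite.mem_toFinset])⟩
  obtain ⟨v, hv, hvall⟩ := exists_top_aux R hrefl htrans htot W hWne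
  refine ⟨v, fun w => ?_⟩
  have hmem : g (f w) ∈ W := by
    refine Finset.mem_image_of_mem g ?_
    simp [Set.Finite.mem_toFinset]
  have h1 : R v (g (f w)) := hvall _ hmem
  -- g (f w) is in the same component as w
  have hex : ∃ u, f w = f u := ⟨w, rfl⟩
  have hspec : f w = f (g (f w)) := by
    have := hex.choose_spec
    simp only [hg, dif_pos hex]
    exact this
  have hwmem : w ∈ f w := by
    refine ⟨Set.notMem_empty w, Relation.ReflTransGen.refl, Relation.ReflTransGen.refl⟩
  rw [hspec] at hwmem
  have h2 : R (g (f w)) w := by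
    have := hwmem.2.2
    exact Relation.ReflTransGen.mono (r := fun a b => a ∉ (∅ : Set V) ∧ b ∉ (∅ : Set V) ∧ E a b) (p := E) (fun a b hab => hab.2.2) _ _ this
  exact htrans h1 h2
end

section
/- Every solid digraph on a countably infinite vertex type contains a ray. -/
namespace Stmt5Aux

open Relation List

variable {V : Type*} {E : V → V → Prop}

/-- The edge relation of `D − X`. -/
abbrev Ed (E : V → V → Prop) (X : Set V) (a b : V) : Prop := a ∉ X ∧ b ∉ X ∧ E a b

lemma sameComp_refl (X : Set V) (u : V) : SameComp E X u u := ⟨.refl, .refl⟩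

lemma sameComp_symm {X : Set V} {u v : V} (h : SameComp E X u v) : SameComp E X v u :=
  ⟨h.2, h.1⟩

lemma sameComp_trans {X : Set V} {u v w : V} (h1 : SameComp E X u v) (h2 : SameComp E X v w) :
    SameComp E X u w := ⟨h1.1.trans h2.1, h2.2.trans h1.2⟩

lemma sameComp_mono {X X' : Set V} (h : X ⊆ X') {u v : V} (hs : SameComp E X' u v) :
    SameComp E X u v := by
  refine ⟨ReflTransGen.mono ?_ _ _ hs.1, ReflTransGen.mono ?_ _ _ hs.2⟩ <;>
    exact fun a b hab => ⟨fun ha => hab.1 (h ha), fun hb => hab.2.1 (h hb), hab.2.2⟩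

/-- The strong component of `v` in `D − X`. -/
def Comp (E : V → V → Prop) (X : Set V) (v : V) : Set V := {u | u ∉ X ∧ SameComp E X u v}

lemma mem_comp_self {X : Set V} {v : V} (h : v ∉ X) : v ∈ Comp E X v :=
  ⟨h, sameComp_refl X v⟩

lemma comp_subset {X X' : Set V} (hXX : X ⊆ X') {u v : V} (huv : SameComp E X u v) :
    Comp E X' u ⊆ Comp E X v := by
  rintro w ⟨hwX', hw⟩
  exact ⟨fun hw' => hwX' (hXX hw'), sameComp_trans (sameComp_mono hXX hw) huv⟩

lemma exists_infinite_comp (hsolid : IsSolid E) {X' : Set V} (hX' : X'.Finite)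
    {S : Set V} (hS : S.Infinite) :
    ∃ u ∈ S, u ∉ X' ∧ (Comp E X' u).Infinite := by
  have hS' : (S \ X').Infinite := hS.diff hX'
  set F : Set (Set V) := Comp E X' '' (S \ X') with hF
  have hFfin : F.Finite := by
    refine (hsolid X' hX').subset ?_
    rintro C ⟨u, hu, rfl⟩
    exact ⟨u, hu.2, rfl⟩
  have hcover : S \ X' ⊆ ⋃₀ F := by
    intro u hu
    exact ⟨Comp E X' u, ⟨u, hu, rfl⟩, mem_comp_self hu.2⟩
  by_contra hcon
  push_neg at hcon
  have hall : ∀ C ∈ F, C.Finite := by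
    rintro C ⟨u, hu, rfl⟩
    rcases hcon u hu.1 hu.2 with h
    exact h
  exact hS' ((hFfin.sUnion hall).subset hcover)

section Chains

variable {r : V → V → Prop}

lemma chain_mem_not_mem {X : Set V} :
    ∀ (l : List V) (a : V), Chain (Ed E X) a l → ∀ x ∈ l, x ∉ X := by
  intro l
  induction l with
  | nil => intro a _ x hx; simp at hx
  | cons c t ih =>
    intro a hc x hx
    rcases List.chain_cons.mp hc with ⟨hac, ht⟩
    rcases List.mem_cons.mp hx with rfl | hx
    · exact hac.2.1
    · exact ih c ht x hx

lemma chain_reach :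
    ∀ (l : List V) (a : V), Chain r a l → ∀ x ∈ a :: l,
      ReflTransGen r a x ∧ ReflTransGen r x ((a :: l).getLast (List.cons_ne_nil a l)) := by
  intro l
  induction l with
  | nil =>
    intro a _ x hx
    simp only [List.mem_singleton] at hx
    subst hx
    simp [ReflTransGen.refl]
  | cons c t ih =>
    intro a hc x hx
    rcases List.chain_cons.mp hc with ⟨hac, ht⟩
    have hlast : (a :: c :: t).getLast (List.cons_ne_nil _ _) =
        (c :: t).getLast (List.cons_ne_nil _ _) := List.getLast_cons (List.cons_ne_nil _ _)
    rcases List.mem_cons.mp hx with rfl | hx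
    · refine ⟨ReflTransGen.refl, ?_⟩
      rw [hlast]
      exact (ih c ht c List.mem_cons_self).2.head hac
    · have := ih c ht x hx
      rw [hlast]
      exact ⟨(this.1).head hac, this.2⟩

lemma chain_dedup :
    ∀ (n : ℕ) (l : List V) (a : V), l.length ≤ n → Chain r a l →
      ∃ l', Chain r a l' ∧
        (a :: l').getLast (List.cons_ne_nil a l') = (a :: l).getLast (List.cons_ne_nil a l) ∧
        (a :: l').Nodup ∧ l' ⊆ l := by
  intro n
  induction n with
  | zero =>
    intro l a hl _
    have : l = [] := List.length_eq_zero_iff.mp (Nat.le_zero.mp hl)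
    subst this
    exact ⟨[], List.Chain.nil, rfl, by simp, by simp⟩
  | succ n ih =>
    intro l a hl hc
    by_cases ha : a ∈ l
    · obtain ⟨l1, l2, rfl⟩ := List.append_of_mem ha
      have hc2 : Chain r a l2 := (List.isChain_cons_split.mp hc).2
      have hlen : l2.length ≤ n := by
        have := hl
        simp only [List.length_append, List.length_cons] at this
        omega
      obtain ⟨l', h1, h2, h3, h4⟩ := ih l2 a hlen hc2
      refine ⟨l', h1, ?_, h3, fun x hx => by
        simp only [List.mem_append, List.mem_cons]
        exact Or.inr (Or.inr (h4 hx))⟩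
      have h5 : ((a :: l1) ++ (a :: l2)).getLast (by simp) =
          (a :: l2).getLast (List.cons_ne_nil _ _) := by
        rw [List.getLast_append]; simp
      exact h2.trans h5.symm
    · match l with
      | [] => exact ⟨[], List.Chain.nil, rfl, by simp, by simp⟩
      | c :: t =>
        rcases List.chain_cons.mp hc with ⟨hac, ht⟩
        have hlen : t.length ≤ n := by
          simp only [List.length_cons] at hl; omega
        obtain ⟨l', h1, h2, h3, h4⟩ := ih t c hlen ht
        refine ⟨c :: l', List.chain_cons.mpr ⟨hac, h1⟩, ?_, ?_, ?_⟩
        · rw [List.getLast_cons (List.cons_ne_nil _ _), h2,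
            List.getLast_cons (List.cons_ne_nil _ _)]
        · refine List.nodup_cons.mpr ⟨?_, h3⟩
          intro hmem
          rcases List.mem_cons.mp hmem with rfl | hmem
          · exact ha List.mem_cons_self
          · exact ha (List.mem_cons_of_mem _ (h4 hmem))
        · intro x hx
          rcases List.mem_cons.mp hx with rfl | hx
          · exact List.mem_cons_self
          · exact List.mem_cons_of_mem _ (h4 hx)

lemma chain_truncate (S : Set V) :
    ∀ (l : List V) (a : V), Chain r a l →
      (a :: l).getLast (List.cons_ne_nil a l) ∈ S →
      ∃ l₁ s, Chain r a l₁ ∧ (a :: l₁).getLast (List.cons_ne_nil a l₁) = s ∧ s ∈ S ∧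
        (∀ x ∈ a :: l₁, x ≠ s → x ∉ S) ∧ (a :: l₁) <+: (a :: l) := by
  intro l
  induction l with
  | nil =>
    intro a _ hb
    refine ⟨[], a, List.Chain.nil, rfl, by simpa using hb, ?_, List.prefix_refl _⟩
    intro x hx hxs
    simp only [List.mem_singleton] at hx
    exact absurd hx hxs
  | cons c t ih =>
    intro a hc hb
    by_cases haS : a ∈ S
    · refine ⟨[], a, List.Chain.nil, rfl, haS, ?_, ?_⟩
      · intro x hx hxs
        simp only [List.mem_singleton] at hx
        exact absurd hx hxs
      · exact ⟨c :: t, rfl⟩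
    · rcases List.chain_cons.mp hc with ⟨hac, ht⟩
      have hb' : (c :: t).getLast (List.cons_ne_nil _ _) ∈ S := by
        rwa [List.getLast_cons (List.cons_ne_nil _ _)] at hb
      obtain ⟨l₁, s, h1, h2, h3, h4, h5⟩ := ih c ht hb'
      refine ⟨c :: l₁, s, List.chain_cons.mpr ⟨hac, h1⟩, ?_, h3, ?_, ?_⟩
      · rw [List.getLast_cons (List.cons_ne_nil _ _)]; exact h2
      · intro x hx hxs
        rcases List.mem_cons.mp hx with rfl | hx
        · exact haS
        · exact h4 x hx hxs
      · exact List.cons_prefix_cons.mpr ⟨rfl, h5⟩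

end Chains

section Main

variable (e : ℕ → V)

def XS (e : ℕ → V) (m : ℕ) : Set V := e '' Set.Iio m

lemma XS_finite (m : ℕ) : (XS e m).Finite := (Set.finite_Iio m).image e

lemma XS_mono {m m' : ℕ} (h : m ≤ m') : XS e m ⊆ XS e m' :=
  Set.image_mono (Set.Iio_subset_Iio h)

lemma exists_bound (he : Function.Surjective e) (P : List V) :
    ∃ m, ∀ x ∈ P, x ∈ XS e m := by
  induction P with
  | nil => exact ⟨0, by simp⟩
  | cons a P ih =>
    obtain ⟨m, hm⟩ := ih
    obtain ⟨i, hi⟩ := he a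
    refine ⟨max m (i + 1), ?_⟩
    intro x hx
    rcases List.mem_cons.mp hx with rfl | hx
    · exact ⟨i, by simp only [Set.mem_Iio]; omega, hi⟩
    · exact XS_mono e (le_max_left _ _) (hm x hx)

def Inv (E : V → V → Prop) (e : ℕ → V) (m : ℕ) (v : V) (P : List V) : Prop :=
  v ∉ XS e m ∧ (Comp E (XS e m) v).Infinite ∧ P ≠ [] ∧ P.Chain' E ∧ P.Nodup ∧
  ∀ h : P ≠ [], P.getLast h ∈ Comp E (XS e m) v ∧
    ∀ x ∈ P, x ≠ P.getLast h → x ∉ Comp E (XS e m) v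

lemma init (hsolid : IsSolid E) [Infinite V] : ∃ v P, Inv E e 0 v P := by
  obtain ⟨u, -, huX, hinf⟩ :=
    exists_infinite_comp hsolid (XS_finite e 0) (Set.infinite_univ (α := V))
  refine ⟨u, [u], huX, hinf, by simp, List.IsChain.singleton _, by simp, ?_⟩
  intro h
  refine ⟨by simpa using mem_comp_self huX, ?_⟩
  intro x hx hxs
  simp only [List.mem_singleton] at hx
  subst hx
  simp at hxs

lemma step (hsolid : IsSolid E) (he : Function.Surjective e) {m : ℕ} {v : V} {P : List V}
    (h : Inv E e m v P) :
    ∃ m' v' P', Inv E e m' v' P' ∧ P <+: P' ∧ P.length < P'.length := by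
  obtain ⟨hvX, hCinf, hPne, hPchain, hPnodup, hlastP⟩ := h
  obtain ⟨hwC, hPout⟩ := hlastP hPne
  set w := P.getLast hPne with hw
  obtain ⟨m0, hm0⟩ := exists_bound e he P
  set m' := max (m + 1) m0 with hm'
  have hXsub : XS e m ⊆ XS e m' := XS_mono e (by omega)
  have hPX : ∀ x ∈ P, x ∈ XS e m' := fun x hx => XS_mono e (le_max_right _ _) (hm0 x hx)
  obtain ⟨u, huC, huX', hC'inf⟩ := exists_infinite_comp hsolid (XS_finite e m') hCinf
  set C := Comp E (XS e m) v with hC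
  set C' := Comp E (XS e m') u with hC'
  have hC'sub : C' ⊆ C := comp_subset hXsub huC.2
  have hreach : ReflTransGen (Ed E (XS e m)) w u := hwC.2.1.trans huC.2.2
  obtain ⟨l, hchain, hlastl⟩ := List.exists_isChain_cons_of_relationReflTransGen hreach
  obtain ⟨l₂, hc2, hlast2, hnodup2, hsub2⟩ := chain_dedup l.length l w le_rfl hchain
  have hlast2' : (w :: l₂).getLast (List.cons_ne_nil _ _) = u := hlast2.trans hlastl
  have huC' : u ∈ C' := mem_comp_self huX'
  obtain ⟨l₁, s, hc1, hlast1, hsC', hnotin, hpre⟩ :=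
    chain_truncate C' l₂ w hc2 (by rwa [hlast2'])
  have hnodup1 : (w :: l₁).Nodup := List.Nodup.sublist hpre.sublist hnodup2
  have hwP : w ∈ P := List.getLast_mem hPne
  have hwX' : w ∈ XS e m' := hPX w hwP
  have hwnC' : w ∉ C' := fun hc => hc.1 hwX'
  have hl₁ne : l₁ ≠ [] := by
    intro hnil
    subst hnil
    simp only [List.getLast_singleton] at hlast1
    exact hwnC' (hlast1 ▸ hsC')
  have hmemC : ∀ x ∈ l₁, x ∈ C := by
    intro x hx
    have hx' := chain_reach l₁ w hc1 x (List.mem_cons_of_mem _ hx)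
    have hreach_xs : ReflTransGen (Ed E (XS e m)) x s := hlast1 ▸ hx'.2
    have hsC : s ∈ C := hC'sub hsC'
    have hxnX : x ∉ XS e m := chain_mem_not_mem l₁ w hc1 x hx
    exact ⟨hxnX, hreach_xs.trans hsC.2.1, hwC.2.2.trans hx'.1⟩
  set P' := P ++ l₁ with hP'
  have hdisj : ∀ x ∈ l₁, x ∉ P := by
    intro x hx hxP
    by_cases hxw : x = w
    · subst hxw
      exact (List.nodup_cons.mp hnodup1).1 hx
    · exact hPout x hxP hxw (hmemC x hx)
  have hnodupP' : P'.Nodup :=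
    hPnodup.append (List.nodup_cons.mp hnodup1).2 (fun a haP hal => hdisj a hal haP)
  have hchainE1 : Chain E w l₁ := List.IsChain.imp (fun a b hab => hab.2.2) hc1
  have hchainP' : P'.Chain' E := by
    rw [hP', List.Chain', List.isChain_append]
    refine ⟨hPchain, ?_, ?_⟩
    · exact (show IsChain E (w :: l₁) from hchainE1).tail
    · obtain ⟨c, t, rfl⟩ := List.exists_cons_of_ne_nil hl₁ne
      intro x hx y hy
      rw [List.getLast?_eq_getLast hPne] at hx
      simp only [Option.mem_def, Option.some.injEq, List.head?_cons] at hx hy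
      subst hx; subst hy
      exact (List.chain_cons.mp hchainE1).1
  have hP'ne : P' ≠ [] := fun hnil => hPne (List.append_eq_nil_iff.mp hnil).1
  have hlastP' : P'.getLast hP'ne = s := by
    show (P ++ l₁).getLast (fun hnil => hPne (List.append_eq_nil_iff.mp hnil).1) = s
    rw [List.getLast_append, dif_neg (by simp [hl₁ne])]
    exact (List.getLast_cons (a := w) hl₁ne).symm.trans hlast1
  refine ⟨m', u, P', ⟨huX', hC'inf, hP'ne, hchainP', hnodupP', ?_⟩, ⟨l₁, rfl⟩, ?_⟩
  · intro hne
    have hlasteq : P'.getLast hne = s := hlastP'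
    rw [hlasteq]
    refine ⟨hsC', ?_⟩
    intro x hx hxs
    rcases List.mem_append.mp hx with hxP | hxl
    · exact fun hxC' => hxC'.1 (hPX x hxP)
    · exact hnotin x (List.mem_cons_of_mem _ hxl) hxs
  · have : 0 < l₁.length := List.length_pos_iff.mpr hl₁ne
    simp only [hP', List.length_append]
    omega

end Main

end Stmt5Aux

theorem stmt_5 {V : Type*} [Countable V] [Infinite V] (E : V → V → Prop)
    (h_irr : ∀ v : V, ¬ E v v)
    (h_solid : IsSolid E) :
    ∃ r : ℕ → V, Function.Injective r ∧ ∀ n : ℕ, E (r n) (r (n + 1)) := by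
  classical
  obtain ⟨e, he⟩ := exists_surjective_nat V
  obtain ⟨v0, P0, h0⟩ := Stmt5Aux.init e h_solid
  let T := {q : ℕ × V × List V // Stmt5Aux.Inv E e q.1 q.2.1 q.2.2}
  have hstep : ∀ t : T, ∃ t' : T, t.1.2.2 <+: t'.1.2.2 ∧ t.1.2.2.length < t'.1.2.2.length := by
    rintro ⟨⟨m, v, P⟩, h⟩
    obtain ⟨m', v', P', h', hpre, hlen⟩ := Stmt5Aux.step e h_solid he h
    exact ⟨⟨⟨m', v', P'⟩, h'⟩, hpre, hlen⟩
  choose next hnext1 hnext2 using hstep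
  let f : ℕ → T := fun n => Nat.rec ⟨⟨0, v0, P0⟩, h0⟩ (fun _ t => next t) n
  let Q : ℕ → List V := fun n => (f n).1.2.2
  have hQ1 : ∀ n, Q n <+: Q (n + 1) := fun n => hnext1 (f n)
  have hQ2 : ∀ n, (Q n).length < (Q (n + 1)).length := fun n => hnext2 (f n)
  have hinv : ∀ n, Stmt5Aux.Inv E e (f n).1.1 (f n).1.2.1 (Q n) := fun n => (f n).2
  have hQlen : ∀ n, n < (Q n).length := by
    intro n
    induction n with
    | zero => exact List.length_pos_iff.mpr (hinv 0).2.2.1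
    | succ n ih => have := hQ2 n; omega
  have hQpre : ∀ {a b : ℕ}, a ≤ b → Q a <+: Q b := by
    intro a b hab
    induction b, hab using Nat.le_induction with
    | base => exact List.prefix_refl _
    | succ b hb ih => exact ih.trans (hQ1 b)
  refine ⟨fun n => (Q n)[n]'(hQlen n), ?_, ?_⟩
  · intro a b hab
    replace hab : (Q a)[a]'(hQlen a) = (Q b)[b]'(hQlen b) := hab
    rcases le_total a b with h | h
    · rw [(hQpre h).getElem (hQlen a)] at hab
      exact ((hinv b).2.2.2.2.1.getElem_inj_iff).mp hab
    · rw [(hQpre h).getElem (hQlen b)] at hab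
      exact (((hinv a).2.2.2.2.1.getElem_inj_iff).mp hab)
  · intro n
    have hch := (hinv (n + 1)).2.2.2.1
    rw [List.Chain', List.isChain_iff_getElem] at hch
    have h1 : n < (Q (n + 1)).length - 1 := by have := hQlen (n + 1); omega
    have h2 := hch n (by omega)
    show E ((Q n)[n]'(hQlen n)) ((Q (n + 1))[n + 1]'(hQlen (n + 1)))
    rw [(hQpre (Nat.le_succ n)).getElem (hQlen n)]
    exact h2
end

section
/- In a solid digraph every ray is solid: if D is a solid digraph and r is a ray in D, then for every finite set X of vertices there is an N such that all the vertices r n with n ≥ N lie outside X and in a single strong component of D − X. -/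
theorem stmt_6 {V : Type*} (E : V → V → Prop)
    (h_irr : ∀ v : V, ¬ E v v)
    (h_solid : IsSolid E)
    (r : ℕ → V) (h_inj : Function.Injective r)
    (h_ray : ∀ n : ℕ, E (r n) (r (n + 1)))
    (X : Set V) (hX : X.Finite) :
    ∃ N : ℕ, (∀ n : ℕ, N ≤ n → r n ∉ X) ∧
      (∀ m n : ℕ, N ≤ m → N ≤ n → SameComp E X (r m) (r n)) := by
  classical
  have hpre : {n : ℕ | r n ∈ X}.Finite := hX.preimage h_inj.injOn
  obtain ⟨N₀, hN₀⟩ : ∃ N₀, ∀ n, N₀ ≤ n → r n ∉ X := by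
    rcases hpre.bddAbove with ⟨B, hB⟩
    exact ⟨B + 1, fun n hn hmem => absurd (hB hmem) (by omega)⟩
  set rel := fun a b => a ∉ X ∧ b ∉ X ∧ E a b with hrel
  have hforward : ∀ m n, N₀ ≤ m → m ≤ n →
      Relation.ReflTransGen rel (r m) (r n) := by
    intro m n hm hmn
    induction n, hmn using Nat.le_induction with
    | base => exact .refl
    | succ n hn ih =>
      exact ih.tail ⟨hN₀ n (le_trans hm hn), hN₀ (n + 1) (by omega), h_ray n⟩
  set t := {C : Set V | ∃ v, v ∉ X ∧ C = {u | u ∉ X ∧ SameComp E X u v}} with ht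
  have htfin := h_solid X hX
  set f : ℕ → Set V := fun n => {u | u ∉ X ∧ SameComp E X u (r n)} with hf
  have hft : ∀ n, N₀ ≤ n → f n ∈ t := fun n hn => ⟨r n, hN₀ n hn, rfl⟩
  have hmemf : ∀ n, N₀ ≤ n → r n ∈ f n := fun n hn =>
    ⟨hN₀ n hn, Relation.ReflTransGen.refl, Relation.ReflTransGen.refl⟩
  have hexC : ∃ C ∈ t, {n | N₀ ≤ n ∧ f n = C}.Infinite := by
    by_contra h
    push_neg at h
    have hfin : {n : ℕ | N₀ ≤ n}.Finite := by
      have hsub : {n : ℕ | N₀ ≤ n} ⊆ ⋃ C ∈ t, {n | N₀ ≤ n ∧ f n = C} := by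
        intro n hn
        exact Set.mem_biUnion (hft n hn) ⟨hn, rfl⟩
      exact (htfin.biUnion fun C hC => h C hC).subset hsub
    exact Set.Ici_infinite N₀ hfin
  obtain ⟨C, hC, hSinf⟩ := hexC
  obtain ⟨a₀, ha₀⟩ := hSinf.nonempty
  have key : ∀ m, a₀ ≤ m → SameComp E X (r m) (r a₀) := by
    intro m hm
    obtain ⟨b, hbS, hbm⟩ := hSinf.exists_gt m
    have h1 : SameComp E X (r b) (r a₀) := by
      have hmem := hmemf b hbS.1
      rw [hbS.2, ← ha₀.2] at hmem
      exact hmem.2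
    exact ⟨(hforward m b (le_trans ha₀.1 hm) hbm.le).trans h1.1,
      hforward a₀ m ha₀.1 hm⟩
  refine ⟨a₀, fun n hn => hN₀ n (le_trans ha₀.1 hn), fun m n hm hn => ?_⟩
  exact ⟨(key m hm).1.trans (key n hn).2, (key n hn).1.trans (key m hm).2⟩
end

section
/- Let D be a solid tournament on a countably infinite vertex type. Then D has a solid ray, and there is a solid ray R* such that for every solid ray R of D there exist a ray R₁ equivalent to R, a ray R₂ equivalent to R*, and an infinite family of pairwise vertex-disjoint finite directed paths in D, each starting at a vertex in the image of R₁ and ending at a vertex in the image of R₂. (This says that the end represented by R* is the greatest element of the end order ≤_Ω of D.) -/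
/-- A ray in a digraph. -/
def IsRay {V : Type*} (E : V → V → Prop) (r : ℕ → V) : Prop :=
  Function.Injective r ∧ ∀ n : ℕ, E (r n) (r (n + 1))

/-- A solid ray: it has a tail in a single strong component of `D − X`
for every finite `X`. -/
def IsSolidRay {V : Type*} (E : V → V → Prop) (r : ℕ → V) : Prop :=
  IsRay E r ∧ ∀ X : Set V, X.Finite →
    ∃ N : ℕ, (∀ n : ℕ, N ≤ n → r n ∉ X) ∧
      (∀ m n : ℕ, N ≤ m → N ≤ n → SameComp E X (r m) (r n))

/-- Two rays are equivalent if for every finite `X` they have tails in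
the same strong component of `D − X`. -/
def RayEquiv {V : Type*} (E : V → V → Prop) (r r' : ℕ → V) : Prop :=
  ∀ X : Set V, X.Finite →
    ∃ N M : ℕ, (∀ n : ℕ, N ≤ n → r n ∉ X) ∧ (∀ m : ℕ, M ≤ m → r' m ∉ X) ∧
      (∀ n m : ℕ, N ≤ n → M ≤ m → SameComp E X (r n) (r' m))

namespace StmtAux

variable {V : Type*} (E : V → V → Prop)

/-- single edge step avoiding `X`. -/
abbrev Step (X : Set V) : V → V → Prop := fun a b => a ∉ X ∧ b ∉ X ∧ E a b

/-- reachability avoiding `X`. -/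
abbrev Reach (X : Set V) (u v : V) : Prop := Relation.ReflTransGen (Step E X) u v

variable {E}

theorem sameComp_iff {X : Set V} {u v : V} :
    SameComp E X u v ↔ Reach E X u v ∧ Reach E X v u := Iff.rfl

theorem Reach.refl {X : Set V} (u : V) : Reach E X u u := Relation.ReflTransGen.refl

theorem Reach.trans {X : Set V} {u v w : V} (h : Reach E X u v) (h' : Reach E X v w) :
    Reach E X u w := Relation.ReflTransGen.trans h h'

theorem Reach.mono {X Y : Set V} (hXY : X ⊆ Y) {u v : V} (h : Reach E Y u v) :
    Reach E X u v :=
  Relation.ReflTransGen.mono (r := Step E Y) (p := Step E X) (fun a b hab => ⟨fun h' => hab.1 (hXY h'), fun h' => hab.2.1 (hXY h'), hab.2.2⟩) u v h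

theorem SameComp.refl {X : Set V} (u : V) : SameComp E X u u := ⟨Reach.refl u, Reach.refl u⟩

theorem SameComp.symm {X : Set V} {u v : V} (h : SameComp E X u v) : SameComp E X v u :=
  ⟨h.2, h.1⟩

theorem SameComp.trans {X : Set V} {u v w : V} (h : SameComp E X u v) (h' : SameComp E X v w) :
    SameComp E X u w := ⟨h.1.trans h'.1, h'.2.trans h.2⟩

theorem SameComp.mono {X Y : Set V} (hXY : X ⊆ Y) {u v : V} (h : SameComp E Y u v) :
    SameComp E X u v := ⟨Reach.mono hXY h.1, Reach.mono hXY h.2⟩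

theorem SameComp.not_mem {X : Set V} {u v : V} (h : SameComp E X u v) (hne : u ≠ v) :
    u ∉ X := by
  rcases (Relation.ReflTransGen.cases_head h.1) with h1 | ⟨c, hc, -⟩
  · exact absurd h1 hne
  · exact hc.1

/-- the component of `v` in `D - X`. -/
def Comp (E : V → V → Prop) (X : Set V) (v : V) : Set V := {u | SameComp E X u v}

theorem comp_eq_of_sameComp {X : Set V} {u v : V} (h : SameComp E X u v) :
    Comp E X u = Comp E X v := by
  ext w; exact ⟨fun hw => SameComp.trans hw h, fun hw => SameComp.trans hw h.symm⟩

/-- `v` lies in an infinite component of `D - X`. -/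
def InfComp (E : V → V → Prop) (X : Set V) (v : V) : Prop := v ∉ X ∧ (Comp E X v).Infinite

/-- `b` is a bottom vertex: every vertex in an infinite component reaches it. -/
def IsBot (E : V → V → Prop) (X : Set V) (b : V) : Prop :=
  InfComp E X b ∧ ∀ v, InfComp E X v → Reach E X v b

theorem exists_reps (h_solid : IsSolid E) [Nonempty V] {X : Set V} (hX : X.Finite) :
    ∃ S : Set V, S.Finite ∧ ∀ v, v ∉ X → ∃ s ∈ S, s ∉ X ∧ SameComp E X v s := by
  classical
  have hF := h_solid X hX
  set pick : Set V → V := fun C => if h : ∃ v, v ∈ C then h.choose else Classical.arbitrary V with hpick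
  refine ⟨pick '' {C : Set V | ∃ v, v ∉ X ∧ C = {u | u ∉ X ∧ SameComp E X u v}}, hF.image _, ?_⟩
  intro v hv
  set C : Set V := {u | u ∉ X ∧ SameComp E X u v} with hC
  have hCmem : C ∈ {C : Set V | ∃ v, v ∉ X ∧ C = {u | u ∉ X ∧ SameComp E X u v}} := ⟨v, hv, rfl⟩
  have hex : ∃ u, u ∈ C := ⟨v, hv, SameComp.refl v⟩
  refine ⟨pick C, Set.mem_image_of_mem _ hCmem, ?_, ?_⟩
  · have : pick C ∈ C := by rw [hpick]; simpa [hex] using hex.choose_spec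
    exact this.1
  · have : pick C ∈ C := by rw [hpick]; simpa [hex] using hex.choose_spec
    exact this.2.symm

theorem pigeonhole {S : Set V} (hS : S.Finite) {T : Set V} (hT : T.Infinite)
    {A : V → Set V} (h : ∀ v ∈ T, ∃ s ∈ S, v ∈ A s) :
    ∃ s ∈ S, (T ∩ A s).Infinite := by
  by_contra hcon
  push_neg at hcon
  have : T ⊆ ⋃ s ∈ S, T ∩ A s := by
    intro v hv; rcases h v hv with ⟨s, hs, hvs⟩
    exact Set.mem_biUnion hs ⟨hv, hvs⟩
  exact hT (Set.Finite.subset (Set.Finite.biUnion hS (fun s hs => hcon s hs)) this)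

end StmtAux

namespace StmtAux

variable {V : Type*} {E : V → V → Prop}

theorem reach_total (h_tour : ∀ u v : V, u ≠ v → Xor' (E u v) (E v u))
    {X : Set V} {u v : V} (hu : u ∉ X) (hv : v ∉ X) :
    Reach E X u v ∨ Reach E X v u := by
  rcases eq_or_ne u v with rfl | hne
  · exact Or.inl (Reach.refl u)
  · rcases h_tour u v hne with ⟨h, -⟩ | ⟨h, -⟩
    · exact Or.inl (Relation.ReflTransGen.single ⟨hu, hv, h⟩)
    · exact Or.inr (Relation.ReflTransGen.single ⟨hv, hu, h⟩)

theorem finset_bot (h_tour : ∀ u v : V, u ≠ v → Xor' (E u v) (E v u))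
    {X : Set V} (s : Finset V) (hs : s.Nonempty) (hsx : ∀ v ∈ s, v ∉ X) :
    ∃ b ∈ s, ∀ v ∈ s, Reach E X v b := by
  classical
  induction s using Finset.induction_on with
  | empty => exact absurd hs (by simp)
  | @insert a t ha ih =>
    rcases t.eq_empty_or_nonempty with rfl | hne
    · refine ⟨a, by simp, ?_⟩
      intro v hv
      rcases Finset.mem_insert.1 hv with rfl | hv
      · exact Reach.refl v
      · simp at hv
    · obtain ⟨b, hb, hmin⟩ := ih hne (fun v hv => hsx v (Finset.mem_insert_of_mem hv))
      have hbx : b ∉ X := hsx b (Finset.mem_insert_of_mem hb)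
      have hax : a ∉ X := hsx a (Finset.mem_insert_self a t)
      rcases reach_total h_tour hax hbx with h | h
      · refine ⟨b, Finset.mem_insert_of_mem hb, ?_⟩
        intro v hv
        rcases Finset.mem_insert.1 hv with rfl | hv
        · exact h
        · exact hmin v hv
      · refine ⟨a, Finset.mem_insert_self a t, ?_⟩
        intro v hv
        rcases Finset.mem_insert.1 hv with rfl | hv
        · exact Reach.refl v
        · exact (hmin v hv).trans h

theorem exists_isBot [Infinite V] (h_tour : ∀ u v : V, u ≠ v → Xor' (E u v) (E v u))
    (h_solid : IsSolid E) {X : Set V} (hX : X.Finite) :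
    ∃ b, IsBot E X b := by
  classical
  obtain ⟨S, hSfin, hS⟩ := exists_reps (E := E) h_solid hX
  have hXc : (Xᶜ : Set V).Infinite := hX.infinite_compl
  have hcover : ∀ v ∈ (Xᶜ : Set V), ∃ s ∈ S, v ∈ Comp E X s := by
    intro v hv
    obtain ⟨s, hsS, _, hvs⟩ := hS v hv
    exact ⟨s, hsS, hvs⟩
  set S' : Set V := {s ∈ S | InfComp E X s} with hS'
  have hS'fin : S'.Finite := hSfin.subset (Set.sep_subset _ _)
  have hS'ne : S'.Nonempty := by
    obtain ⟨s, hsS, hinf⟩ := pigeonhole hSfin hXc hcover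
    refine ⟨s, hsS, ?_, hinf.mono Set.inter_subset_right⟩
    obtain ⟨v, hvc, hv⟩ := hinf.nonempty
    rcases eq_or_ne v s with rfl | hne
    · exact hvc
    · exact SameComp.not_mem (SameComp.symm (hv : SameComp E X v s)) hne.symm
  obtain ⟨b, hbS', hmin⟩ := finset_bot h_tour hS'fin.toFinset
    (by simpa [Set.Finite.toFinset_nonempty] using hS'ne)
    (fun v hv => ((hS'fin.mem_toFinset.1 hv).2).1)
  rw [Set.Finite.mem_toFinset] at hbS'
  refine ⟨b, hbS'.2, ?_⟩
  intro v hv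
  obtain ⟨s, hsS, hsx, hvs⟩ := hS v hv.1
  have hsinf : InfComp E X s := by
    refine ⟨hsx, ?_⟩
    rw [← comp_eq_of_sameComp (hvs : SameComp E X v s)]
    exact hv.2
  have : Reach E X s b := hmin s (hS'fin.mem_toFinset.2 ⟨hsS, hsinf⟩)
  exact (hvs.1).trans this

end StmtAux

namespace StmtAux

variable {V : Type*} {E : V → V → Prop}

theorem reach_transfer {X Z : Set V} (hXZ : X ⊆ Z) {b : V}
    (hd : ∀ z ∈ Z, z ∉ X → ¬ SameComp E X z b) {w : V} (hwb : SameComp E X w b) :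
    ∀ u, Reach E X u w → SameComp E X u b → Reach E Z u w := by
  intro u h
  induction h using Relation.ReflTransGen.head_induction_on with
  | refl => exact fun _ => Reach.refl w
  | @head a c step rest ih =>
    intro hab
    have hcb : SameComp E X c b := by
      refine ⟨rest.trans hwb.1, hab.2.trans (Relation.ReflTransGen.single step)⟩
    have haZ : a ∉ Z := fun hz => hd a hz step.1 hab
    have hcZ : c ∉ Z := fun hz => hd c hz step.2.1 hcb
    exact Relation.ReflTransGen.head ⟨haZ, hcZ, step.2.2⟩ (ih hcb)

theorem sameComp_transfer {X Z : Set V} (hXZ : X ⊆ Z) {b : V}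
    (hd : ∀ z ∈ Z, z ∉ X → ¬ SameComp E X z b) {u : V} (h : SameComp E X u b) :
    SameComp E Z u b :=
  ⟨reach_transfer hXZ hd (SameComp.refl b) u h.1 h,
   reach_transfer hXZ hd h b h.2 (SameComp.refl b)⟩

theorem isBot_sameComp [Infinite V] [Nonempty V] (h_solid : IsSolid E)
    {X Y : Set V} (hXY : X ⊆ Y) (hY : Y.Finite)
    {u b : V} (hu : IsBot E X u) (hb : IsBot E Y b) : SameComp E X u b := by
  classical
  have hbX : b ∉ X := fun h => hb.1.1 (hXY h)
  have hbu : Reach E X b u := by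
    refine hu.2 b ⟨hbX, hb.1.2.mono ?_⟩
    intro x hx
    exact SameComp.mono hXY hx
  have hT : (Comp E X u \ Y).Infinite := hu.1.2.diff hY
  obtain ⟨S, hSfin, hS⟩ := exists_reps (E := E) h_solid hY
  obtain ⟨s, hsS, hinf⟩ := pigeonhole hSfin hT (fun v hv => by
    obtain ⟨t, htS, _, hvt⟩ := hS v hv.2
    exact ⟨t, htS, hvt⟩)
  obtain ⟨c, hcT, hcs⟩ := hinf.nonempty
  have hcY : InfComp E Y c := by
    refine ⟨hcT.2, ?_⟩
    have : (Comp E Y s).Infinite := hinf.mono Set.inter_subset_right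
    rwa [comp_eq_of_sameComp (hcs : SameComp E Y c s)]
  have hcb : Reach E Y c b := hb.2 c hcY
  have huc : Reach E X u c := (hcT.1 : SameComp E X c u).2
  exact ⟨huc.trans (Reach.mono hXY hcb), hbu⟩

theorem chain_not_mem {X : Set V} :
    ∀ {l : List V} {a : V}, List.Chain' (Step E X) (a :: l) → a ∉ X → ∀ x ∈ a :: l, x ∉ X := by
  intro l
  induction l with
  | nil => intro a _ ha x hx; simp at hx; subst hx; exact ha
  | cons c t ih =>
    intro a hch ha x hx
    unfold List.Chain' at hch
    rw [List.isChain_cons_cons] at hch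
    rcases List.mem_cons.1 hx with rfl | hx
    · exact ha
    · exact ih hch.2 hch.1.2.1 x hx

theorem chain_reach {r : V → V → Prop} :
    ∀ {l : List V} {a w : V}, List.Chain' r (a :: l) → (a :: l).getLast? = some w →
      ∀ x ∈ a :: l, Relation.ReflTransGen r a x ∧ Relation.ReflTransGen r x w := by
  intro l
  induction l with
  | nil =>
    intro a w _ hlast x hx
    simp at hlast hx
    subst hlast; subst hx
    exact ⟨Relation.ReflTransGen.refl, Relation.ReflTransGen.refl⟩
  | cons c t ih =>
    intro a w hch hlast x hx
    unfold List.Chain' at hch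
    rw [List.isChain_cons_cons] at hch
    rw [List.getLast?_cons_cons] at hlast
    rcases List.mem_cons.1 hx with rfl | hx
    · refine ⟨Relation.ReflTransGen.refl, ?_⟩
      exact Relation.ReflTransGen.head hch.1 ((ih hch.2 hlast c (List.mem_cons_self (a := c) (l := t))).2)
    · obtain ⟨h1, h2⟩ := ih hch.2 hlast x hx
      exact ⟨Relation.ReflTransGen.head hch.1 h1, h2⟩

theorem chainOf {r : V → V → Prop} {a b : V} (h : Relation.ReflTransGen r a b) :
    ∃ l : List V, l.head? = some a ∧ l.getLast? = some b ∧ List.Chain' r l ∧ l.Nodup := by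
  induction h using Relation.ReflTransGen.head_induction_on with
  | refl => exact ⟨[b], rfl, rfl, List.isChain_singleton b, List.nodup_singleton b⟩
  | @head x y step rest ih =>
    obtain ⟨l, hhead, hlast, hchain, hnodup⟩ := ih
    by_cases hxl : x ∈ l
    · obtain ⟨l₁, l₂, rfl⟩ := List.append_of_mem hxl
      refine ⟨x :: l₂, rfl, ?_, ?_, ?_⟩
      · rw [List.getLast?_append] at hlast
        rcases h' : (x :: l₂).getLast? with _ | w
        · simp at h'
        · rw [h'] at hlast; simpa using hlast
      · exact hchain.suffix ⟨l₁, rfl⟩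
      · exact hnodup.sublist (List.sublist_append_right l₁ (x :: l₂))
    · cases l with
      | nil => simp at hhead
      | cons c t =>
        have hcy : c = y := by simpa using hhead
        exact ⟨x :: c :: t, rfl, by rw [List.getLast?_cons_cons]; exact hlast,
          List.isChain_cons_cons.2 ⟨by rw [hcy]; exact step, hchain⟩, List.nodup_cons.2 ⟨hxl, hnodup⟩⟩

end StmtAux

namespace StmtAux

variable {V : Type*} {E : V → V → Prop}

/-- vertex set of a list -/
def lset (l : List V) : Set V := {x | x ∈ l}

theorem lset_finite (l : List V) : (lset l).Finite := l.finite_toSet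

theorem mem_lset {l : List V} {x : V} : x ∈ lset l ↔ x ∈ l := Iff.rfl

theorem getLast?_cons_of_ne_nil {l : List V} (h : l ≠ []) (a : V) :
    (a :: l).getLast? = l.getLast? := by
  cases l with
  | nil => exact absurd rfl h
  | cons c t => exact List.getLast?_cons_cons

theorem ext_step [Infinite V] (h_tour : ∀ u v : V, u ≠ v → Xor' (E u v) (E v u))
    (h_solid : IsSolid E) {X : Set V} (hX : X.Finite)
    {u : V} (hu : IsBot E X u) (e : V) :
    ∃ l : List V, l ≠ [] ∧ List.Chain' (Step E X) (u :: l) ∧ (u :: l).Nodup ∧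
      (∀ x ∈ u :: l, SameComp E X x u) ∧
      ∃ w, l.getLast? = some w ∧ IsBot E (X ∪ {u, e} ∪ lset l.dropLast) w := by
  classical
  have : Nonempty V := inferInstance
  set Y : Set V := X ∪ {u, e} with hYdef
  have hYfin : Y.Finite := hX.union ((Set.finite_singleton e).insert u)
  have hXY : X ⊆ Y := Set.subset_union_left
  have huY : u ∈ Y := Set.mem_union_right _ (by simp)
  obtain ⟨b, hb⟩ := exists_isBot h_tour h_solid hYfin
  have hub : SameComp E X u b := isBot_sameComp h_solid hXY hYfin hu hb
  have hune : u ≠ b := fun h => hb.1.1 (h ▸ huY)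
  obtain ⟨L, hLh, hLl, hLc, hLn⟩ := chainOf hub.1
  obtain ⟨t, rfl⟩ : ∃ t, L = u :: t := by
    cases L with
    | nil => simp at hLh
    | cons c t =>
      simp at hLh
      exact ⟨t, by rw [hLh]⟩
  have htne : t ≠ [] := by
    rintro rfl
    simp at hLl
    exact hune hLl
  -- minimal good chain
  set P : List V → Prop := fun l => l ≠ [] ∧ List.Chain' (Step E X) (u :: l) ∧
    (u :: l).Nodup ∧ ∃ w, l.getLast? = some w ∧ SameComp E Y w b with hPdef
  have hex : ∃ n, ∃ l, P l ∧ l.length = n := by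
    refine ⟨t.length, t, ⟨htne, hLc, hLn, b, ?_, SameComp.refl b⟩, rfl⟩
    rw [← getLast?_cons_of_ne_nil htne u]
    exact hLl
  obtain ⟨l, hPl, hlen⟩ := Nat.find_spec hex
  obtain ⟨hlne, hchain, hnodup, w, hwlast, hwb⟩ := hPl
  have hdrop : ∀ z ∈ l.dropLast, ¬ SameComp E Y z b := by
    intro z hz hzb
    obtain ⟨i, hi, hiz⟩ := List.getElem_of_mem hz
    rw [List.getElem_dropLast] at hiz
    have hi' : i < l.length - 1 := by simpa using hi
    have hilt : i < l.length := lt_of_lt_of_le hi' (Nat.sub_le _ _)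
    refine Nat.find_min hex (m := i + 1) (by omega) ⟨l.take (i + 1), ⟨?_, ?_, ?_, l[i], ?_, hiz ▸ hzb⟩, ?_⟩
    · simp [List.take_eq_nil_iff]
      exact hlne
    · have : u :: l.take (i + 1) = (u :: l).take (i + 2) := by simp
      rw [this]
      exact List.IsChain.take hchain _
    · have : u :: l.take (i + 1) = (u :: l).take (i + 2) := by simp
      rw [this]
      exact hnodup.sublist ((u :: l).take_sublist _)
    · rw [List.take_succ]
      have : l[i]? = some l[i] := List.getElem?_eq_getElem hilt
      rw [this]
      rw [List.getLast?_append]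
      simp
    · simp [List.length_take]
      omega
  set Z : Set V := Y ∪ lset l.dropLast with hZdef
  have hZfin : Z.Finite := hYfin.union (lset_finite _)
  have hYZ : Y ⊆ Z := Set.subset_union_left
  have hd : ∀ z ∈ Z, z ∉ Y → ¬ SameComp E Y z b := by
    intro z hz hzY
    rcases hz with hz | hz
    · exact absurd hz hzY
    · exact hdrop z hz
  have transfer : ∀ {v : V}, SameComp E Y v b → SameComp E Z v b :=
    fun hv => sameComp_transfer hYZ hd hv
  have hbZ : b ∉ Z := by
    rintro (hbY | hbl)
    · exact hb.1.1 hbY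
    · exact hdrop b hbl (SameComp.refl b)
  have hbotZ : IsBot E Z b := by
    refine ⟨⟨hbZ, ?_⟩, ?_⟩
    · refine hb.1.2.mono ?_
      intro x hx
      exact transfer hx
    · intro v hv
      by_cases hvb : SameComp E Y v b
      · exact (transfer hvb).1
      · have hinf : (Comp E Z v \ (Z ∪ {b})).Infinite :=
          hv.2.diff (hZfin.union (Set.finite_singleton b))
        obtain ⟨c, hc1, hc2⟩ := hinf.nonempty
        have hcZ : c ∉ Z := fun h => hc2 (Or.inl h)
        have hcb : c ≠ b := fun h => hc2 (Or.inr (by simp [h]))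
        have hvc : Reach E Z v c := (hc1 : SameComp E Z c v).2
        rcases h_tour c b hcb with ⟨hE, -⟩ | ⟨hE, -⟩
        · exact hvc.trans (Relation.ReflTransGen.single ⟨hcZ, hbZ, hE⟩)
        · have hcY : InfComp E Y c := by
            refine ⟨fun h => hcZ (hYZ h), ?_⟩
            have : (Comp E Z c).Infinite := by
              rw [comp_eq_of_sameComp (hc1 : SameComp E Z c v)]
              exact hv.2
            exact this.mono (fun x hx => SameComp.mono hYZ hx)
          have h1 : Reach E Y c b := hb.2 c hcY
          have h2 : Reach E Y b c :=
            Relation.ReflTransGen.single ⟨hb.1.1, hcY.1, hE⟩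
          have : SameComp E Z c b := transfer ⟨h1, h2⟩
          exact hvc.trans this.1
  -- w facts
  have hwZb : SameComp E Z w b := transfer hwb
  have hwY : w ∉ Y := by
    rcases eq_or_ne w b with rfl | hne
    · exact hb.1.1
    · exact SameComp.not_mem hwb hne
  have hweq : w = l.getLast hlne := by
    rw [List.getLast?_eq_getLast hlne] at hwlast
    injection hwlast with h
    exact h.symm
  have hwdrop : w ∉ l.dropLast := by
    have hln : l.Nodup := (List.nodup_cons.1 hnodup).2
    have hl2 : l.dropLast ++ [w] = l := by
      rw [hweq]; exact List.dropLast_append_getLast hlne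
    rw [← hl2] at hln
    rw [List.nodup_append] at hln
    intro hcon
    exact hln.2.2 w hcon w (by simp) rfl
  have hwZ : w ∉ Z := by
    rintro (h | h)
    · exact hwY h
    · exact hwdrop h
  have hwXu : SameComp E X w u :=
    SameComp.trans (SameComp.mono hXY hwb) (SameComp.symm hub)
  refine ⟨l, hlne, hchain, hnodup, ?_, w, hwlast, ?_⟩
  · intro x hx
    have hlast2 : (u :: l).getLast? = some w := by
      rw [getLast?_cons_of_ne_nil hlne u]; exact hwlast
    obtain ⟨h1, h2⟩ := chain_reach hchain hlast2 x hx
    exact ⟨h2.trans hwXu.1, h1⟩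
  · have hZeq : X ∪ {u, e} ∪ lset l.dropLast = Z := rfl
    rw [hZeq]
    refine ⟨⟨hwZ, ?_⟩, ?_⟩
    · rw [comp_eq_of_sameComp hwZb]
      exact hbotZ.1.2
    · intro v hv
      exact (hbotZ.2 v hv).trans hwZb.2

end StmtAux

namespace StmtAux

variable {V : Type*} {E : V → V → Prop}

/-- deleted set at stage `n` with current path `l`. -/
def Xof (f : ℕ → V) (n : ℕ) (l : List V) : Set V := lset l.dropLast ∪ f '' Set.Iio n

theorem Xof_finite (f : ℕ → V) (n : ℕ) (l : List V) : (Xof f n l).Finite :=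
  (lset_finite _).union ((Set.finite_Iio n).image f)

/-- invariant for the recursive construction of the bottom ray. -/
def Good (E : V → V → Prop) (f : ℕ → V) (n : ℕ) (l : List V) : Prop :=
  l ≠ [] ∧ l.Chain' E ∧ l.Nodup ∧ ∃ w, l.getLast? = some w ∧ IsBot E (Xof f n l) w

theorem good_init [Infinite V] (h_tour : ∀ u v : V, u ≠ v → Xor' (E u v) (E v u))
    (h_solid : IsSolid E) (f : ℕ → V) :
    ∃ l : List V, Good E f 0 l ∧ l.length = 1 := by
  obtain ⟨b, hb⟩ := exists_isBot h_tour h_solid (Set.finite_empty (α := V))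
  have hXeq : Xof f 0 [b] = (∅ : Set V) := by
    ext x; simp [Xof, lset]
  refine ⟨[b], ⟨by simp, List.isChain_singleton b, List.nodup_singleton b, b, rfl, ?_⟩, rfl⟩
  rw [hXeq]
  exact hb

theorem good_step [Infinite V] (h_tour : ∀ u v : V, u ≠ v → Xor' (E u v) (E v u))
    (h_solid : IsSolid E) (f : ℕ → V) {n : ℕ} {l : List V} (h : Good E f n l) :
    ∃ l₁ : List V, l₁ ≠ [] ∧ Good E f (n + 1) (l ++ l₁) ∧
      ∀ x ∈ l₁, x ∉ l ∧ ∃ w, l.getLast? = some w ∧ SameComp E (Xof f n l) x w := by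
  classical
  obtain ⟨hlne, hchain, hnodup, u, hulast, hubot⟩ := h
  set X : Set V := Xof f n l with hXdef
  have hXfin : X.Finite := Xof_finite f n l
  obtain ⟨l₁, hl₁ne, hl₁chain, hl₁nodup, hl₁same, w, hwlast, hwbot⟩ :=
    ext_step h_tour h_solid hXfin hubot (f n)
  have huX : u ∉ X := hubot.1.1
  have hl₁X : ∀ x ∈ u :: l₁, x ∉ X := chain_not_mem hl₁chain huX
  have hldecomp : l.dropLast ++ [u] = l := by
    have : u = l.getLast hlne := by
      rw [List.getLast?_eq_getLast hlne] at hulast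
      injection hulast with h'
      exact h'.symm
    rw [this]; exact List.dropLast_append_getLast hlne
  have hmeml : ∀ x ∈ l, x ∈ l.dropLast ∨ x = u := by
    intro x hx
    rw [← hldecomp] at hx
    rcases List.mem_append.1 hx with h' | h'
    · exact Or.inl h'
    · exact Or.inr (by simpa using h')
  have hnotl : ∀ x ∈ l₁, x ∉ l := by
    intro x hx hxl
    rcases hmeml x hxl with h' | rfl
    · exact hl₁X x (List.mem_cons_of_mem u hx) (Or.inl h')
    · exact (List.nodup_cons.1 hl₁nodup).1 hx
  refine ⟨l₁, hl₁ne, ⟨?_, ?_, ?_, ?_⟩, ?_⟩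
  · simp [hlne]
  · -- chain
    refine List.IsChain.append hchain ((List.isChain_cons.1 (hl₁chain.imp (fun a b hab => hab.2.2))).2) ?_
    intro x hx y hy
    rw [hulast] at hx
    have hx' : u = x := by injection hx
    subst hx'
    exact (List.isChain_cons.1 (hl₁chain.imp (fun a b hab => hab.2.2))).1 y hy
  · -- nodup
    refine List.Nodup.append hnodup (List.nodup_cons.1 hl₁nodup).2 ?_
    intro a ha ha'
    exact hnotl a ha' ha
  · -- bottom endpoint
    refine ⟨w, ?_, ?_⟩
    · rw [List.getLast?_append, hwlast]; rfl
    · have hXeq : Xof f (n + 1) (l ++ l₁) = X ∪ {u, f n} ∪ lset l₁.dropLast := by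
        rw [hXdef]
        ext x
        have hdl : (l ++ l₁).dropLast = l ++ l₁.dropLast := by
          rw [List.dropLast_append]
          simp [hl₁ne]
        simp only [Xof, hdl, mem_lset, Set.mem_union, Set.mem_setOf_eq, List.mem_append,
          Set.mem_image, Set.mem_Iio, Set.mem_insert_iff, Set.mem_singleton_iff]
        constructor
        · rintro ((hx | hx) | ⟨k, hk, rfl⟩)
          · rcases hmeml x hx with h' | rfl
            · exact Or.inl (Or.inl (Or.inl h'))
            · exact Or.inl (Or.inr (Or.inl rfl))
          · exact Or.inr hx
          · rcases Nat.lt_succ_iff_lt_or_eq.1 hk with hk' | rfl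
            · exact Or.inl (Or.inl (Or.inr ⟨k, hk', rfl⟩))
            · exact Or.inl (Or.inr (Or.inr rfl))
        · rintro ((((hx | ⟨k, hk, rfl⟩) | (rfl | rfl)) | hx))
          · exact Or.inl (Or.inl (by rw [← hldecomp]; exact List.mem_append.2 (Or.inl hx)))
          · exact Or.inr ⟨k, Nat.lt_succ_of_lt hk, rfl⟩
          · exact Or.inl (Or.inl (by rw [← hldecomp]; exact List.mem_append.2 (Or.inr (by simp))))
          · exact Or.inr ⟨n, Nat.lt_succ_self n, rfl⟩
          · exact Or.inl (Or.inr hx)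
      rw [hXeq]
      exact hwbot
  · -- new vertices
    intro x hx
    refine ⟨hnotl x hx, u, hulast, hl₁same x (List.mem_cons_of_mem u hx)⟩

end StmtAux

namespace StmtAux

variable {V : Type*} {E : V → V → Prop}

noncomputable def seqF [Infinite V] (h_tour : ∀ u v : V, u ≠ v → Xor' (E u v) (E v u))
    (h_solid : IsSolid E) (f : ℕ → V) : (n : ℕ) → {l : List V // Good E f n l}
  | 0 => ⟨(good_init h_tour h_solid f).choose, (good_init h_tour h_solid f).choose_spec.1⟩
  | n + 1 =>
    ⟨(seqF h_tour h_solid f n).1 ++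
        (good_step h_tour h_solid f (seqF h_tour h_solid f n).2).choose,
      (good_step h_tour h_solid f (seqF h_tour h_solid f n).2).choose_spec.2.1⟩

section Seq

variable [Infinite V] (h_tour : ∀ u v : V, u ≠ v → Xor' (E u v) (E v u))
    (h_solid : IsSolid E) (f : ℕ → V)

/-- the nested paths -/
noncomputable def seqL (n : ℕ) : List V := (seqF h_tour h_solid f n).1

theorem good_seqL (n : ℕ) : Good E f n (seqL h_tour h_solid f n) :=
  (seqF h_tour h_solid f n).2

theorem seqL_ne (n : ℕ) : seqL h_tour h_solid f n ≠ [] := (good_seqL h_tour h_solid f n).1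

/-- extension at stage n -/
noncomputable def extL (n : ℕ) : List V :=
  (good_step h_tour h_solid f (seqF h_tour h_solid f n).2).choose

theorem seqL_succ (n : ℕ) :
    seqL h_tour h_solid f (n + 1) = seqL h_tour h_solid f n ++ extL h_tour h_solid f n := rfl

theorem extL_ne (n : ℕ) : extL h_tour h_solid f n ≠ [] :=
  (good_step h_tour h_solid f (seqF h_tour h_solid f n).2).choose_spec.1

theorem extL_new (n : ℕ) : ∀ x ∈ extL h_tour h_solid f n, x ∉ seqL h_tour h_solid f n ∧
    ∃ w, (seqL h_tour h_solid f n).getLast? = some w ∧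
      SameComp E (Xof f n (seqL h_tour h_solid f n)) x w :=
  (good_step h_tour h_solid f (seqF h_tour h_solid f n).2).choose_spec.2.2

theorem seqL_zero_len : (seqL h_tour h_solid f 0).length = 1 :=
  (good_init h_tour h_solid f).choose_spec.2

/-- last vertex at stage n -/
noncomputable def wlast (n : ℕ) : V :=
  (seqL h_tour h_solid f n).getLast (seqL_ne h_tour h_solid f n)

theorem wlast_last? (n : ℕ) :
    (seqL h_tour h_solid f n).getLast? = some (wlast h_tour h_solid f n) :=
  List.getLast?_eq_getLast _

theorem wlast_bot (n : ℕ) :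
    IsBot E (Xof f n (seqL h_tour h_solid f n)) (wlast h_tour h_solid f n) := by
  obtain ⟨-, -, -, w, hw, hbot⟩ := good_seqL h_tour h_solid f n
  rw [wlast_last?] at hw
  injection hw with h
  rw [h]
  exact hbot

theorem seqL_prefix {n m : ℕ} (h : n ≤ m) :
    seqL h_tour h_solid f n <+: seqL h_tour h_solid f m := by
  induction m, h using Nat.le_induction with
  | base => exact List.prefix_refl _
  | succ m hm ih =>
    refine ih.trans ?_
    rw [seqL_succ]
    exact List.prefix_append _ _

theorem seqL_len_lt {n m : ℕ} (h : n < m) :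
    (seqL h_tour h_solid f n).length < (seqL h_tour h_solid f m).length := by
  induction m, h using Nat.le_induction with
  | base =>
    rw [seqL_succ, List.length_append]
    have := extL_ne h_tour h_solid f n
    have : 0 < (extL h_tour h_solid f n).length := List.length_pos_iff.2 this
    omega
  | succ m hm ih =>
    rw [seqL_succ, List.length_append]
    have : 0 < (extL h_tour h_solid f m).length := List.length_pos_iff.2 (extL_ne h_tour h_solid f m)
    omega

theorem seqL_len_ge (n : ℕ) : n + 1 ≤ (seqL h_tour h_solid f n).length := by
  induction n with
  | zero => rw [seqL_zero_len]
  | succ n ih =>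
    have h2 := seqL_len_lt h_tour h_solid f (Nat.lt_succ_self n)
    exact Nat.succ_le_of_lt (Nat.lt_of_le_of_lt ih h2)

theorem mem_seqL_of_mem {n m : ℕ} (h : n ≤ m) {x : V} (hx : x ∈ seqL h_tour h_solid f n) :
    x ∈ seqL h_tour h_solid f m :=
  (seqL_prefix h_tour h_solid f h).subset hx

theorem mem_dropLast_seqL {n m : ℕ} (h : n < m) {x : V} (hx : x ∈ seqL h_tour h_solid f n) :
    x ∈ (seqL h_tour h_solid f m).dropLast := by
  obtain ⟨i, hi, hix⟩ := List.getElem_of_mem hx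
  have hlt : i < (seqL h_tour h_solid f m).dropLast.length := by
    have h1 := seqL_len_lt h_tour h_solid f h
    have h2 : (seqL h_tour h_solid f m).dropLast.length = (seqL h_tour h_solid f m).length - 1 :=
      List.length_dropLast
    omega
  have : (seqL h_tour h_solid f m).dropLast[i] = x := by
    rw [List.getElem_dropLast]
    rw [← hix]
    exact ((seqL_prefix h_tour h_solid f (le_of_lt h)).getElem hi).symm
  rw [← this]
  exact List.getElem_mem hlt

theorem Xof_mono {n m : ℕ} (h : n ≤ m) :
    Xof f n (seqL h_tour h_solid f n) ⊆ Xof f m (seqL h_tour h_solid f m) := by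
  rcases eq_or_lt_of_le h with rfl | hlt
  · exact subset_rfl
  · rintro x (hx | ⟨k, hk, rfl⟩)
    · exact Or.inl (mem_dropLast_seqL h_tour h_solid f hlt (List.dropLast_sublist _ |>.subset hx))
    · exact Or.inr ⟨k, lt_of_lt_of_le hk (le_of_lt hlt), rfl⟩

theorem tail_claim {n m : ℕ} (h : n ≤ m) :
    SameComp E (Xof f n (seqL h_tour h_solid f n)) (wlast h_tour h_solid f m)
      (wlast h_tour h_solid f n) ∧
    ∀ x ∈ seqL h_tour h_solid f m, x ∉ seqL h_tour h_solid f n →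
      SameComp E (Xof f n (seqL h_tour h_solid f n)) x (wlast h_tour h_solid f n) := by
  induction m, h using Nat.le_induction with
  | base =>
    exact ⟨SameComp.refl _, fun x hx hx' => absurd hx hx'⟩
  | succ m hm ih =>
    have hnew : ∀ x ∈ extL h_tour h_solid f m,
        SameComp E (Xof f n (seqL h_tour h_solid f n)) x (wlast h_tour h_solid f n) := by
      intro x hx
      obtain ⟨-, w, hw, hsame⟩ := extL_new h_tour h_solid f m x hx
      rw [wlast_last?] at hw
      injection hw with hweq
      rw [← hweq] at hsame
      exact SameComp.trans (SameComp.mono (Xof_mono h_tour h_solid f hm) hsame) ih.1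
    constructor
    · have : wlast h_tour h_solid f (m + 1) ∈ extL h_tour h_solid f m := by
        have hgl : (seqL h_tour h_solid f (m + 1)).getLast? =
            some (wlast h_tour h_solid f (m + 1)) := wlast_last? h_tour h_solid f (m + 1)
        rw [seqL_succ, List.getLast?_append] at hgl
        rw [List.getLast?_eq_getLast (extL_ne h_tour h_solid f m)] at hgl
        simp only [Option.some_or] at hgl
        injection hgl with h'
        rw [← h']
        exact List.getLast_mem _
      exact hnew _ this
    · intro x hx hxn
      rw [seqL_succ] at hx
      rcases List.mem_append.1 hx with hx' | hx'
      · exact ih.2 x hx' hxn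
      · exact hnew x hx'

end Seq
end StmtAux

namespace StmtAux

variable {V : Type*} {E : V → V → Prop}

section Ray
variable [Infinite V] (h_tour : ∀ u v : V, u ≠ v → Xor' (E u v) (E v u))
    (h_solid : IsSolid E) (f : ℕ → V)

/-- the bottom ray -/
noncomputable def RstarF (i : ℕ) : V := (seqL h_tour h_solid f (i + 1)).getD i (f 0)

theorem RstarF_get {i m : ℕ} (h : i + 1 ≤ m) :
    ∃ hlt : i < (seqL h_tour h_solid f m).length,
      RstarF h_tour h_solid f i = (seqL h_tour h_solid f m)[i] := by
  have hlt : i < (seqL h_tour h_solid f m).length := by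
    have := seqL_len_ge h_tour h_solid f m; omega
  have hlt1 : i < (seqL h_tour h_solid f (i + 1)).length := by
    have := seqL_len_ge h_tour h_solid f (i + 1); omega
  refine ⟨hlt, ?_⟩
  rw [RstarF, List.getD_eq_getElem _ _ hlt1]
  exact (seqL_prefix h_tour h_solid f h).getElem hlt1

theorem RstarF_ray : IsRay E (RstarF h_tour h_solid f) := by
  constructor
  · intro i j hij
    set m : ℕ := max i j + 1 with hm
    obtain ⟨hi, hieq⟩ := RstarF_get h_tour h_solid f (show i + 1 ≤ m by omega)
    obtain ⟨hj, hjeq⟩ := RstarF_get h_tour h_solid f (show j + 1 ≤ m by omega)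
    rw [hieq, hjeq] at hij
    exact ((good_seqL h_tour h_solid f m).2.2.1.getElem_inj_iff).1 hij
  · intro i
    obtain ⟨hi, hieq⟩ := RstarF_get h_tour h_solid f (show i + 1 ≤ i + 2 by omega)
    obtain ⟨hj, hjeq⟩ := RstarF_get h_tour h_solid f (show (i + 1) + 1 ≤ i + 2 by omega)
    rw [hieq, hjeq]
    have hch := (good_seqL h_tour h_solid f (i + 2)).2.1
    unfold List.Chain' at hch
    rw [List.isChain_iff_getElem] at hch
    have := hch i (by omega)
    simpa using this

theorem exists_bound (hsurj : Function.Surjective f) {X : Set V} (hX : X.Finite) :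
    ∃ n, X ⊆ f '' Set.Iio n := by
  refine Set.Finite.induction_on X hX ⟨0, by simp⟩ ?_
  intro a s _ _ ih
  obtain ⟨n, hn⟩ := ih
  obtain ⟨k, rfl⟩ := hsurj a
  refine ⟨max n (k + 1), ?_⟩
  rintro x (rfl | hx)
  · exact ⟨k, by simp only [Set.mem_Iio]; omega, rfl⟩
  · obtain ⟨j, hj, rfl⟩ := hn hx
    exact ⟨j, by simp only [Set.mem_Iio] at hj ⊢; omega, rfl⟩

theorem master (hsurj : Function.Surjective f) {X : Set V} (hX : X.Finite) :
    ∃ n N, X ⊆ Xof f n (seqL h_tour h_solid f n) ∧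
      IsBot E (Xof f n (seqL h_tour h_solid f n)) (wlast h_tour h_solid f n) ∧
      (Xof f n (seqL h_tour h_solid f n)).Finite ∧
      ∀ i, N ≤ i → SameComp E (Xof f n (seqL h_tour h_solid f n)) (RstarF h_tour h_solid f i)
        (wlast h_tour h_solid f n) ∧ RstarF h_tour h_solid f i ∉ Xof f n (seqL h_tour h_solid f n) := by
  obtain ⟨n, hn⟩ := exists_bound f hsurj hX
  have hsub : X ⊆ Xof f n (seqL h_tour h_solid f n) := fun x hx => Or.inr (hn hx)
  refine ⟨n, (seqL h_tour h_solid f n).length, hsub, wlast_bot h_tour h_solid f n,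
    Xof_finite f n _, ?_⟩
  intro i hi
  have hnN : n + 1 ≤ (seqL h_tour h_solid f n).length := seqL_len_ge h_tour h_solid f n
  have hni : n ≤ i + 1 := by omega
  obtain ⟨hlt, heq⟩ := RstarF_get h_tour h_solid f (le_refl (i + 1))
  have hmem : RstarF h_tour h_solid f i ∈ seqL h_tour h_solid f (i + 1) := by
    rw [heq]; exact List.getElem_mem hlt
  have hnot : RstarF h_tour h_solid f i ∉ seqL h_tour h_solid f n := by
    intro hcon
    obtain ⟨k, hk, hkeq⟩ := List.getElem_of_mem hcon
    have hk' : k < (seqL h_tour h_solid f (i + 1)).length := by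
      have := seqL_prefix h_tour h_solid f hni
      have := this.length_le
      omega
    have : (seqL h_tour h_solid f (i + 1))[k] = RstarF h_tour h_solid f i := by
      rw [← hkeq]
      exact ((seqL_prefix h_tour h_solid f hni).getElem hk).symm
    rw [heq] at this
    have := ((good_seqL h_tour h_solid f (i + 1)).2.2.1.getElem_inj_iff).1 this
    omega
  have hsame := (tail_claim h_tour h_solid f hni).2 _ hmem hnot
  refine ⟨hsame, ?_⟩
  rcases eq_or_ne (RstarF h_tour h_solid f i) (wlast h_tour h_solid f n) with heq' | hne
  · rw [heq']
    exact (wlast_bot h_tour h_solid f n).1.1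
  · exact SameComp.not_mem hsame hne

theorem RstarF_solid (hsurj : Function.Surjective f) :
    IsSolidRay E (RstarF h_tour h_solid f) := by
  refine ⟨RstarF_ray h_tour h_solid f, ?_⟩
  intro X hX
  obtain ⟨n, N, hsub, _, _, htail⟩ := master h_tour h_solid f hsurj hX
  refine ⟨N, ?_, ?_⟩
  · intro i hi
    exact fun hc => (htail i hi).2 (hsub hc)
  · intro i j hi hj
    have h1 := SameComp.mono hsub (htail i hi).1
    have h2 := SameComp.mono hsub (htail j hj).1
    exact SameComp.trans h1 (SameComp.symm h2)

theorem selfEquiv {r : ℕ → V} (hr : IsSolidRay E r) : RayEquiv E r r := by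
  intro X hX
  obtain ⟨N, h1, h2⟩ := hr.2 X hX
  exact ⟨N, N, h1, h1, fun nn m hn hm => h2 nn m hn hm⟩

theorem path_exists (hsurj : Function.Surjective f) {R : ℕ → V} (hR : IsSolidRay E R)
    {X' : Set V} (hX' : X'.Finite) :
    ∃ L : List V, L.Chain' E ∧ L.Nodup ∧ (∃ x ∈ Set.range R, L.head? = some x) ∧
      (∃ y ∈ Set.range (RstarF h_tour h_solid f), L.getLast? = some y) ∧
      ∀ x ∈ L, x ∉ X' := by
  obtain ⟨n, N, hsub, hbot, hfin, htail⟩ := master h_tour h_solid f hsurj hX'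
  set Xn : Set V := Xof f n (seqL h_tour h_solid f n) with hXn
  obtain ⟨NR, hR1, hR2⟩ := hR.2 Xn hfin
  have hinf : InfComp E Xn (R NR) := by
    refine ⟨hR1 NR le_rfl, ?_⟩
    refine Set.infinite_of_injective_forall_mem (f := fun i : ℕ => R (NR + i)) ?_ ?_
    · intro i j hij
      have := hR.1.1 hij
      omega
    · intro i
      exact hR2 (NR + i) NR (by omega) le_rfl
  have hreach : Reach E Xn (R NR) (RstarF h_tour h_solid f N) := by
    refine (hbot.2 _ hinf).trans ?_
    exact ((htail N le_rfl).1).2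
  obtain ⟨L, hLh, hLl, hLc, hLn⟩ := chainOf hreach
  obtain ⟨t, rfl⟩ : ∃ t, L = R NR :: t := by
    cases L with
    | nil => simp at hLh
    | cons c t =>
      simp at hLh
      exact ⟨t, by rw [hLh]⟩
  have hnotX : ∀ x ∈ R NR :: t, x ∉ Xn := chain_not_mem hLc (hR1 NR le_rfl)
  refine ⟨R NR :: t, hLc.imp (fun a b hab => hab.2.2), hLn, ⟨R NR, ⟨NR, rfl⟩, rfl⟩,
    ⟨RstarF h_tour h_solid f N, ⟨N, rfl⟩, hLl⟩, ?_⟩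
  intro x hx hxX
  exact hnotX x hx (hsub hxX)

end Ray
end StmtAux

namespace StmtAux

variable {V : Type*} {E : V → V → Prop}

section Paths
variable [Infinite V] (h_tour : ∀ u v : V, u ≠ v → Xor' (E u v) (E v u))
    (h_solid : IsSolid E) (f : ℕ → V) (hsurj : Function.Surjective f)
    {R : ℕ → V} (hR : IsSolidRay E R)

noncomputable def pathsF : ℕ → List (List V)
  | 0 => []
  | k + 1 => pathsF k ++
      [(path_exists h_tour h_solid f hsurj hR
        (X' := lset (pathsF k).flatten) (lset_finite _)).choose]

noncomputable def PF (k : ℕ) : List V :=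
  (path_exists h_tour h_solid f hsurj hR
    (X' := lset (pathsF h_tour h_solid f hsurj hR k).flatten) (lset_finite _)).choose

theorem pathsF_succ (k : ℕ) :
    pathsF h_tour h_solid f hsurj hR (k + 1) =
      pathsF h_tour h_solid f hsurj hR k ++ [PF h_tour h_solid f hsurj hR k] := rfl

theorem PF_spec (k : ℕ) :
    (PF h_tour h_solid f hsurj hR k).Chain' E ∧ (PF h_tour h_solid f hsurj hR k).Nodup ∧
    (∃ x ∈ Set.range R, (PF h_tour h_solid f hsurj hR k).head? = some x) ∧
    (∃ y ∈ Set.range (RstarF h_tour h_solid f),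
      (PF h_tour h_solid f hsurj hR k).getLast? = some y) ∧
    ∀ x ∈ PF h_tour h_solid f hsurj hR k,
      x ∉ lset (pathsF h_tour h_solid f hsurj hR k).flatten :=
  (path_exists h_tour h_solid f hsurj hR
    (X' := lset (pathsF h_tour h_solid f hsurj hR k).flatten) (lset_finite _)).choose_spec

theorem PF_mem_pathsF {i k : ℕ} (h : i < k) :
    PF h_tour h_solid f hsurj hR i ∈ pathsF h_tour h_solid f hsurj hR k := by
  induction k, h using Nat.le_induction with
  | base =>
    rw [pathsF_succ]
    exact List.mem_append.2 (Or.inr (by simp))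
  | succ k hk ih =>
    rw [pathsF_succ]
    exact List.mem_append.2 (Or.inl ih)

theorem PF_disjoint {i j : ℕ} (h : i ≠ j) {x : V}
    (hx : x ∈ PF h_tour h_solid f hsurj hR i) : x ∉ PF h_tour h_solid f hsurj hR j := by
  intro hxj
  rcases lt_or_gt_of_ne h with hlt | hlt
  · refine (PF_spec h_tour h_solid f hsurj hR j).2.2.2.2 x hxj ?_
    rw [mem_lset, List.mem_flatten]
    exact ⟨_, PF_mem_pathsF h_tour h_solid f hsurj hR hlt, hx⟩
  · refine (PF_spec h_tour h_solid f hsurj hR i).2.2.2.2 x hx ?_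
    rw [mem_lset, List.mem_flatten]
    exact ⟨_, PF_mem_pathsF h_tour h_solid f hsurj hR hlt, hxj⟩

end Paths
end StmtAux


theorem stmt_7 {V : Type*} [Countable V] [Infinite V] (E : V → V → Prop)
    (h_irr : ∀ v : V, ¬ E v v)
    (h_tour : ∀ u v : V, u ≠ v → Xor' (E u v) (E v u))
    (h_solid : IsSolid E) :
    (∃ R : ℕ → V, IsSolidRay E R) ∧
    ∃ Rstar : ℕ → V, IsSolidRay E Rstar ∧
      ∀ R : ℕ → V, IsSolidRay E R →
        ∃ R₁ R₂ : ℕ → V, IsRay E R₁ ∧ IsRay E R₂ ∧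
          RayEquiv E R₁ R ∧ RayEquiv E R₂ Rstar ∧
          ∃ P : ℕ → List V,
            (∀ i : ℕ, (P i).Chain' E ∧ (P i).Nodup ∧
              (∃ x ∈ Set.range R₁, (P i).head? = some x) ∧
              (∃ y ∈ Set.range R₂, (P i).getLast? = some y)) ∧
            (∀ i j : ℕ, i ≠ j → ∀ x : V, x ∈ P i → x ∉ P j) := by
  classical
  obtain ⟨f, hsurj⟩ := exists_surjective_nat V
  have hstar := StmtAux.RstarF_solid h_tour h_solid f hsurj
  refine ⟨⟨_, hstar⟩, _, hstar, ?_⟩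
  intro R hR
  refine ⟨R, _, hR.1, hstar.1, StmtAux.selfEquiv hR, StmtAux.selfEquiv hstar,
    StmtAux.PF h_tour h_solid f hsurj hR, ?_, ?_⟩
  · intro i
    obtain ⟨c, nd, hh, hl, -⟩ := StmtAux.PF_spec h_tour h_solid f hsurj hR i
    exact ⟨c, nd, hh, hl⟩
  · intro i j hij x hxi
    exact StmtAux.PF_disjoint h_tour h_solid f hsurj hR hij hxi
end

section
/- The tournament D₀ has no spanning ray: there is no injective map r : ℕ → V₀ with E₀ (r n) (r (n+1)) for all n whose image is all of V₀. -/
/-- The edge relation of the counterexample tournament `D₀` on `Fin 3 × ℕ`: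
edges go up in branch index; within a branch, to the immediate successor,
or back down by at least two. -/
def E₀ : Fin 3 × ℕ → Fin 3 × ℕ → Prop := fun p q =>
  p.1 < q.1 ∨ (p.1 = q.1 ∧ q.2 = p.2 + 1) ∨ (p.1 = q.1 ∧ p.2 ≥ q.2 + 2)

theorem stmt_10 :
    ¬ ∃ r : ℕ → Fin 3 × ℕ, Function.Injective r ∧
      (∀ n : ℕ, E₀ (r n) (r (n + 1))) ∧ Set.range r = Set.univ := by
  rintro ⟨r, hinj, hE, hrange⟩
  have hsurj : Function.Surjective r := Set.range_eq_univ.mp hrange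
  have hmono : Monotone fun n => (r n).1 := by
    apply monotone_nat_of_le_succ
    intro n
    rcases hE n with h | ⟨h, _⟩ | ⟨h, _⟩
    · exact le_of_lt h
    · exact le_of_eq h
    · exact le_of_eq h
  obtain ⟨N, hN⟩ := hsurj (1, 0)
  -- every preimage of a branch-0 vertex is < N
  choose g hg using fun k => hsurj (0, k)
  have hlt : ∀ k, g k < N := by
    intro k
    by_contra h
    push_neg at h
    have := hmono h
    simp only [hg, hN] at this
    exact absurd this (by decide)
  have hginj : Function.Injective g := by
    intro a b hab
    have : ((0 : Fin 3), a) = ((0 : Fin 3), b) := by rw [← hg a, ← hg b, hab]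
    exact (Prod.mk.injEq _ _ _ _).mp this |>.2
  have hinf : Set.Infinite (Set.range g) := Set.infinite_range_of_injective hginj
  have hsub : Set.range g ⊆ Set.Iio N := by
    rintro x ⟨k, rfl⟩; exact hlt k
  exact (Set.finite_Iio N).subset hsub |>.not_infinite hinf
end

section
/- The tournament D₀ has no spanning reverse ray: there is no injective map r : ℕ → V₀ with E₀ (r (n+1)) (r n) for all n whose image is all of V₀. -/
theorem stmt_11 :
    ¬ ∃ r : ℕ → Fin 3 × ℕ, Function.Injective r ∧
      (∀ n : ℕ, E₀ (r (n + 1)) (r n)) ∧ Set.range r = Set.univ := by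
  rintro ⟨r, hinj, hE, hrange⟩
  -- the branch index is antitone along the ray
  have hb : ∀ n, (r (n + 1)).1 ≤ (r n).1 := by
    intro n
    rcases hE n with h | ⟨h, _⟩ | ⟨h, _⟩
    · exact h.le
    · exact h.le
    · exact h.le
  have hmono : Antitone fun n => (r n).1 := antitone_nat_of_succ_le hb
  -- the branch index eventually stabilizes at its minimum value
  set c : ℕ → ℕ := fun n => ((r n).1 : ℕ) with hc
  have hne : (Set.range c).Nonempty := ⟨c 0, 0, rfl⟩
  obtain ⟨N, hN⟩ := Nat.sInf_mem hne
  set i : Fin 3 := (r N).1 with hi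
  have hstab : ∀ n, N ≤ n → (r n).1 = i := by
    intro n hn
    have h1 : (r n).1 ≤ i := hmono hn
    have h2 : (i : ℕ) ≤ ((r n).1 : ℕ) := by
      exact le_trans (le_of_eq hN) (Nat.sInf_le ⟨n, rfl⟩)
    exact le_antisymm h1 (Fin.le_def.mpr h2)
  -- pick a different branch: all of its vertices must occur before N
  have hji : ∀ k : Fin 3, k + 1 ≠ k := by decide
  set j : Fin 3 := i + 1 with hj
  have hget : ∀ m : ℕ, ∃ n, r n = (j, m) := by
    intro m
    have : (j, m) ∈ Set.range r := by rw [hrange]; exact Set.mem_univ _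
    exact this
  choose g hg using hget
  have hlt : ∀ m, g m ∈ Set.Iio N := by
    intro m
    by_contra h
    have hn : N ≤ g m := by simpa [Set.mem_Iio, not_lt] using h
    have := hstab (g m) hn
    rw [hg m] at this
    exact hji i this
  have hginj : Function.Injective g := by
    intro m₁ m₂ h
    have := (hg m₁).symm.trans (h ▸ hg m₂)
    exact (Prod.mk.injEq _ _ _ _ ▸ this).2
  exact (Set.finite_Iio N).not_infinite
    (Set.infinite_of_injective_forall_mem hginj hlt)
end

section
/- The tournament D₀ has no spanning double ray: there is no injective map w : ℤ → V₀ with E₀ (w n) (w (n+1)) for all n ∈ ℤ whose image is all of V₀. -/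
lemma E₀_fst_le {p q : Fin 3 × ℕ} (h : E₀ p q) : p.1 ≤ q.1 := by
  rcases h with h | ⟨h, -⟩ | ⟨h, -⟩
  · exact le_of_lt h
  · exact le_of_eq h
  · exact le_of_eq h

lemma w_fst_mono {w : ℤ → Fin 3 × ℕ} (hE : ∀ n : ℤ, E₀ (w n) (w (n + 1)))
    {m n : ℤ} (h : m ≤ n) : (w m).1 ≤ (w n).1 := by
  obtain ⟨k, rfl⟩ := Int.le.dest h
  clear h
  induction k with
  | zero => simp
  | succ k ih =>
    have := E₀_fst_le (hE (m + k))
    have e : m + (↑(k + 1) : ℤ) = (m + k) + 1 := by push_cast; ring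
    rw [e]
    exact le_trans ih this

theorem stmt_12 :
    ¬ ∃ w : ℤ → Fin 3 × ℕ, Function.Injective w ∧
      (∀ n : ℤ, E₀ (w n) (w (n + 1))) ∧ Set.range w = Set.univ := by
  rintro ⟨w, hinj, hE, hrange⟩
  have hsurj : Function.Surjective w := Set.range_eq_univ.mp hrange
  obtain ⟨n₀, hn₀⟩ := hsurj ((0 : Fin 3), 0)
  obtain ⟨n₂, hn₂⟩ := hsurj ((2 : Fin 3), 0)
  -- every preimage of branch 1 lies strictly between n₀ and n₂
  have key : ∀ n : ℤ, (w n).1 = 1 → n ∈ Set.Ioo n₀ n₂ := by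
    intro n hn
    constructor
    · by_contra h
      have := w_fst_mono hE (le_of_not_gt h)
      rw [hn₀, hn] at this
      exact absurd this (by decide)
    · by_contra h
      have := w_fst_mono hE (le_of_not_gt h)
      rw [hn₂, hn] at this
      exact absurd this (by decide)
  -- choose a preimage of (1, m) for each m
  choose f hf using fun m : ℕ => hsurj ((1 : Fin 3), m)
  have hfinj : Function.Injective f := by
    intro a b hab
    have : ((1 : Fin 3), a) = ((1 : Fin 3), b) := by rw [← hf a, ← hf b, hab]
    exact (Prod.mk.injEq _ _ _ _ ▸ this).2
  have hmem : ∀ m : ℕ, f m ∈ Set.Ioo n₀ n₂ := fun m => key (f m) (by rw [hf m])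
  have hinf : (Set.Ioo n₀ n₂).Infinite :=
    Set.infinite_of_injective_forall_mem hfinj hmem
  exact hinf (Set.finite_Ioo n₀ n₂)
end

section
/- Let D be a digraph on a countable vertex type and let r be a vertex that can reach every other vertex of D. Then D has a normal spanning arborescence rooted at r. -/
/-- `T` is a spanning arborescence of the digraph `E` rooted at `root`. -/
def IsSpanningArborescence {V : Type*} (E T : V → V → Prop) (root : V) : Prop :=
  (∀ u v : V, T u v → E u v) ∧
  (∀ u : V, ¬ T u root) ∧
  (∀ v : V, v ≠ root → ∃! u : V, T u v) ∧
  (∀ v : V, Relation.ReflTransGen T root v)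

/-- The normal assistant of `T` in `E`: the tree edges of `T` together with an
edge `(v, w)` for every two tree-incomparable vertices `v, w` such that `E` has
an edge from the up-closure of `v` to the up-closure of `w`. -/
def NormalAssistant {V : Type*} (E T : V → V → Prop) : V → V → Prop := fun v w =>
  T v w ∨
    (¬ Relation.ReflTransGen T v w ∧ ¬ Relation.ReflTransGen T w v ∧
      ∃ v' w' : V, Relation.ReflTransGen T v v' ∧ Relation.ReflTransGen T w w' ∧ E v' w')

/-- `T` is normal in `E` if its normal assistant is acyclic. -/
def IsNormal {V : Type*} (E T : V → V → Prop) : Prop :=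
  Irreflexive (Relation.TransGen (NormalAssistant E T))

attribute [local instance] Classical.propDecidable

namespace NSA

variable {V : Type*}

structure St (V : Type*) where
  P : Set V
  par : V → V
  lo : V → ℚ
  hi : V → ℚ
  rho : V → ℚ
  anch : V → V

variable (E : V → V → Prop) (root : V)

def Tr (s : St V) (a b : V) : Prop := b ∈ s.P ∧ b ≠ root ∧ s.par b = a

def Anc (s : St V) (a b : V) : Prop := Relation.ReflTransGen (Tr root s) a b

structure Inv (s : St V) : Prop where
  rootMem : root ∈ s.P
  parMem : ∀ v ∈ s.P, v ≠ root → s.par v ∈ s.P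
  parE : ∀ v ∈ s.P, v ≠ root → E (s.par v) v
  nestLo : ∀ v ∈ s.P, v ≠ root → s.lo (s.par v) < s.lo v
  nestHi : ∀ v ∈ s.P, v ≠ root → s.hi v < s.hi (s.par v)
  lohi : ∀ v ∈ s.P, s.lo v < s.hi v
  disj : ∀ u ∈ s.P, ∀ v ∈ s.P, ¬ Anc root s u v → ¬ Anc root s v u →
      s.hi u < s.lo v ∨ s.hi v < s.lo u
  K : ∀ u ∈ s.P, ∀ v ∈ s.P, E u v → Anc root s u v ∨ Anc root s v u ∨ s.hi v < s.lo u
  childRho : ∀ v ∈ s.P, v ≠ root → s.hi v ≤ s.rho (s.par v)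
  anchMem : ∀ u, u ∉ s.P → s.anch u ∈ s.P
  rhoLo : ∀ u, u ∉ s.P → s.lo (s.anch u) ≤ s.rho (s.anch u)
  rhoHi : ∀ u, u ∉ s.P → s.rho (s.anch u) < s.hi (s.anch u)
  reach : ∀ u, u ∉ s.P → Relation.ReflTransGen
      (fun a b => E a b ∧ b ∉ s.P ∧ s.anch b = s.anch u) (s.anch u) u
  K4 : ∀ u, u ∉ s.P → ∀ z ∈ s.P, E z u → Anc root s z (s.anch u) ∨ s.hi (s.anch u) ≤ s.lo z
  K5 : ∀ u, u ∉ s.P → ∀ z ∈ s.P, E u z → Anc root s z (s.anch u) ∨ s.hi z ≤ s.rho (s.anch u)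
  K7 : ∀ u, u ∉ s.P → ∀ u', u' ∉ s.P → s.anch u ≠ s.anch u' → E u u' →
      s.hi (s.anch u') ≤ s.rho (s.anch u)
  T2 : ∀ u, u ∉ s.P → ∀ z ∈ s.P, Anc root s z (s.anch u) ∨ s.hi z ≤ s.rho (s.anch u) ∨
      s.hi (s.anch u) ≤ s.lo z
  rootAnc : ∀ v ∈ s.P, Anc root s root v

variable {E root}

lemma anc_lohi {s : St V} (hs : Inv E root s) {a b : V} (h : Anc root s a b) :
    s.lo a ≤ s.lo b ∧ s.hi b ≤ s.hi a := by
  induction h with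
  | refl => exact ⟨le_refl _, le_refl _⟩
  | tail h1 h2 ih =>
    obtain ⟨hbP, hbr, hpar⟩ := h2
    have l1 := hs.nestLo _ hbP hbr
    have l2 := hs.nestHi _ hbP hbr
    rw [hpar] at l1 l2
    exact ⟨ih.1.trans l1.le, l2.le.trans ih.2⟩

def Ext (s t : St V) : Prop :=
  s.P ⊆ t.P ∧ ∀ v ∈ s.P, t.par v = s.par v ∧ t.lo v = s.lo v ∧ t.hi v = s.hi v

lemma Ext.refl (s : St V) : Ext s s := ⟨le_refl _, fun _ _ => ⟨rfl, rfl, rfl⟩⟩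

lemma Ext.trans {s t u : St V} (h1 : Ext s t) (h2 : Ext t u) : Ext s u := by
  refine ⟨h1.1.trans h2.1, fun v hv => ?_⟩
  obtain ⟨a1, a2, a3⟩ := h1.2 v hv
  obtain ⟨b1, b2, b3⟩ := h2.2 v (h1.1 hv)
  exact ⟨b1.trans a1, b2.trans a2, b3.trans a3⟩

lemma Ext.tr {s t : St V} (h : Ext s t) {a b : V} (hab : Tr root s a b) : Tr root t a b :=
  ⟨h.1 hab.1, hab.2.1, (h.2 b hab.1).1.trans hab.2.2⟩

lemma Ext.anc {s t : St V} (h : Ext s t) {a b : V} (hab : Anc root s a b) :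
    Anc root t a b :=
  Relation.ReflTransGen.mono (r := Tr root s) (p := Tr root t) (fun _ _ hx => h.tr hx) _ _ hab

/-- initial state -/
def initSt (root : V) : St V where
  P := {root}
  par := fun _ => root
  lo := fun _ => 0
  hi := fun _ => 1
  rho := fun _ => 0
  anch := fun _ => root

lemma init_inv (h_irr : ∀ v : V, ¬ E v v)
    (h_reach : ∀ v : V, Relation.ReflTransGen E root v) : Inv E root (initSt root) := by
  have hP : ∀ v : V, v ∈ (initSt root).P ↔ v = root := fun v => Iff.rfl
  constructor
  case rootMem => exact rfl
  case parMem => intro v hv hvr; exact absurd hv hvr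
  case parE => intro v hv hvr; exact absurd hv hvr
  case nestLo => intro v hv hvr; exact absurd hv hvr
  case nestHi => intro v hv hvr; exact absurd hv hvr
  case lohi => intro v _; norm_num [initSt]
  case disj =>
    intro u hu v hv h1 _
    rw [hP] at hu hv
    subst hu; subst hv
    exact absurd Relation.ReflTransGen.refl h1
  case K =>
    intro u hu v hv hE
    rw [hP] at hu hv; subst hu; subst hv
    exact absurd hE (h_irr _)
  case childRho => intro v hv hvr; exact absurd hv hvr
  case anchMem => intro u _; exact rfl
  case rhoLo => intro u _; norm_num [initSt]
  case rhoHi => intro u _; norm_num [initSt]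
  case reach =>
    intro u hu
    have : ∀ x : V, Relation.ReflTransGen E root x → x ≠ root →
        Relation.ReflTransGen (fun a b => E a b ∧ b ∉ (initSt root).P ∧
          (initSt root).anch b = (initSt root).anch u) root x := by
      intro x hx
      induction hx with
      | refl => intro h; exact absurd rfl h
      | tail h1 h2 ih =>
        intro hne
        rename_i b c
        rcases Classical.em (b = root) with he | he
        · rw [he] at h2
          exact Relation.ReflTransGen.single ⟨h2, hne, rfl⟩
        · exact (ih he).tail ⟨h2, hne, rfl⟩
    exact this u (h_reach u) hu
  case K4 =>
    intro u hu z hz _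
    rw [hP] at hz; subst hz
    exact Or.inl Relation.ReflTransGen.refl
  case K5 =>
    intro u hu z hz _
    rw [hP] at hz; subst hz
    exact Or.inl Relation.ReflTransGen.refl
  case K7 => intro u _ u' _ hne _; exact absurd rfl hne
  case T2 =>
    intro u hu z hz
    rw [hP] at hz; subst hz
    exact Or.inl Relation.ReflTransGen.refl
  case rootAnc =>
    intro v hv
    rw [hP] at hv; subst hv
    exact Relation.ReflTransGen.refl


/-! ## The elementary placement step -/

section Elem

variable (E) (s : St V) (u1 : V) (q1 q2 : ℚ)

def QR : V → V → Prop := fun a b => E a b ∧ b ∉ s.P ∧ b ≠ u1 ∧ s.anch b = s.anch u1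

def Rset : Set V := {u | Relation.ReflTransGen (QR E s u1) u1 u ∧ u ≠ u1}

noncomputable def elemSt : St V where
  P := insert u1 s.P
  par := fun v => if v = u1 then s.anch u1 else s.par v
  lo := fun v => if v = u1 then q1 else s.lo v
  hi := fun v => if v = u1 then q2 else s.hi v
  rho := fun v => if v = u1 then q1 else if v = s.anch u1 then q2 else s.rho v
  anch := fun u => if u ∈ Rset E s u1 then u1 else s.anch u

variable {E s u1 q1 q2}

lemma elem_P_iff {v : V} : v ∈ (elemSt E s u1 q1 q2).P ↔ v = u1 ∨ v ∈ s.P :=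
  Set.mem_insert_iff

lemma elem_lo_new : (elemSt E s u1 q1 q2).lo u1 = q1 := if_pos rfl
lemma elem_lo_old {v : V} (h : v ≠ u1) : (elemSt E s u1 q1 q2).lo v = s.lo v := if_neg h
lemma elem_hi_new : (elemSt E s u1 q1 q2).hi u1 = q2 := if_pos rfl
lemma elem_hi_old {v : V} (h : v ≠ u1) : (elemSt E s u1 q1 q2).hi v = s.hi v := if_neg h
lemma elem_par_new : (elemSt E s u1 q1 q2).par u1 = s.anch u1 := if_pos rfl
lemma elem_par_old {v : V} (h : v ≠ u1) : (elemSt E s u1 q1 q2).par v = s.par v := if_neg h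
lemma elem_rho_new : (elemSt E s u1 q1 q2).rho u1 = q1 := if_pos rfl
lemma elem_rho_m (h : s.anch u1 ≠ u1) : (elemSt E s u1 q1 q2).rho (s.anch u1) = q2 := by
  show (if _ then _ else _) = q2
  rw [if_neg h, if_pos rfl]
lemma elem_rho_old {v : V} (h : v ≠ u1) (h2 : v ≠ s.anch u1) :
    (elemSt E s u1 q1 q2).rho v = s.rho v := by
  show (if _ then _ else _) = s.rho v
  rw [if_neg h, if_neg h2]
lemma elem_anch_R {u : V} (h : u ∈ Rset E s u1) : (elemSt E s u1 q1 q2).anch u = u1 :=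
  if_pos h
lemma elem_anch_nR {u : V} (h : u ∉ Rset E s u1) : (elemSt E s u1 q1 q2).anch u = s.anch u :=
  if_neg h

lemma mMem (hs : Inv E root s) (h1 : u1 ∉ s.P) : s.anch u1 ∈ s.P := hs.anchMem u1 h1

lemma mNe (hs : Inv E root s) (h1 : u1 ∉ s.P) : s.anch u1 ≠ u1 :=
  fun h => h1 (h ▸ mMem hs h1)

lemma u1_ne_root (hs : Inv E root s) (h1 : u1 ∉ s.P) : u1 ≠ root :=
  fun h => h1 (h ▸ hs.rootMem)

lemma Rset_spec {u : V} (h : u ∈ Rset E s u1) :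
    u ∉ s.P ∧ u ≠ u1 ∧ s.anch u = s.anch u1 := by
  obtain ⟨hr, hne⟩ := h
  have hne' : ¬ u1 = u := fun hh => hne hh.symm
  rcases hr.cases_tail with h | ⟨c, _, hQR⟩
  · exact absurd h.symm hne'
  · exact ⟨hQR.2.1, hne, hQR.2.2.2⟩

lemma elem_ext (h1 : u1 ∉ s.P) : Ext s (elemSt E s u1 q1 q2) := by
  refine ⟨Set.subset_insert _ _, fun v hv => ?_⟩
  have hne : v ≠ u1 := fun h => h1 (h ▸ hv)
  exact ⟨elem_par_old hne, elem_lo_old hne, elem_hi_old hne⟩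

lemma tr_new (hs : Inv E root s) (h1 : u1 ∉ s.P) :
    Tr root (elemSt E s u1 q1 q2) (s.anch u1) u1 :=
  ⟨Set.mem_insert _ _, u1_ne_root hs h1, elem_par_new⟩

lemma anc_new (hs : Inv E root s) (h1 : u1 ∉ s.P) {a : V} (h : Anc root s a (s.anch u1)) :
    Anc root (elemSt E s u1 q1 q2) a u1 :=
  ((elem_ext h1).anc h).tail (tr_new hs h1)

lemma reach_R : ∀ x : V, Relation.ReflTransGen (QR E s u1) u1 x →
    Relation.ReflTransGen
      (fun a b => E a b ∧ b ∉ (elemSt E s u1 q1 q2).P ∧ (elemSt E s u1 q1 q2).anch b = u1)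
      u1 x := by
  intro x h
  induction h with
  | refl => exact Relation.ReflTransGen.refl
  | tail hpre hstep ih =>
    rename_i b c
    have hcR : c ∈ Rset E s u1 := ⟨hpre.tail hstep, hstep.2.2.1⟩
    have hcP : c ∉ (elemSt E s u1 q1 q2).P := by
      rw [elem_P_iff]; push_neg
      exact ⟨hstep.2.2.1, hstep.2.1⟩
    exact ih.tail ⟨hstep.1, hcP, elem_anch_R hcR⟩

lemma reach_resid (hs : Inv E root s) {u : V} (hu : u ∉ s.P) (ha : s.anch u = s.anch u1)
    (hnR : u ∉ Rset E s u1) (hne : u ≠ u1) :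
    Relation.ReflTransGen
      (fun a b => E a b ∧ b ∉ (elemSt E s u1 q1 q2).P ∧
        (elemSt E s u1 q1 q2).anch b = s.anch u1)
      (s.anch u1) u := by
  have hre := hs.reach u hu
  rw [ha] at hre
  have main : ∀ x : V,
      Relation.ReflTransGen (fun a b => E a b ∧ b ∉ s.P ∧ s.anch b = s.anch u1)
        (s.anch u1) x →
      x ∉ Rset E s u1 → x ≠ u1 →
      Relation.ReflTransGen
        (fun a b => E a b ∧ b ∉ (elemSt E s u1 q1 q2).P ∧
          (elemSt E s u1 q1 q2).anch b = s.anch u1)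
        (s.anch u1) x := by
    intro x hx
    induction hx with
    | refl => intro _ _; exact Relation.ReflTransGen.refl
    | tail hpre hstep ih =>
      rename_i b c
      intro hcnR hcne
      have hcP' : c ∉ (elemSt E s u1 q1 q2).P := by
        rw [elem_P_iff]; push_neg; exact ⟨hcne, hstep.2.1⟩
      have hcan : (elemSt E s u1 q1 q2).anch c = s.anch u1 := by
        rw [elem_anch_nR hcnR, hstep.2.2]
      rcases hpre.cases_tail with hb | ⟨d, _, hQ⟩
      · -- b = s.anch u1
        exact Relation.ReflTransGen.single ⟨hb ▸ hstep.1, hcP', hcan⟩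
      · -- b ∉ s.P
        have hbP : b ∉ s.P := hQ.2.1
        by_cases hbu : b = u1
        · exfalso
          exact hcnR ⟨Relation.ReflTransGen.single
            ⟨hbu ▸ hstep.1, hstep.2.1, hcne, hstep.2.2⟩, hcne⟩
        · by_cases hbR : b ∈ Rset E s u1
          · exfalso
            exact hcnR ⟨hbR.1.tail ⟨hstep.1, hstep.2.1, hcne, hstep.2.2⟩, hcne⟩
          · exact (ih hbR hbu).tail ⟨hstep.1, hcP', hcan⟩
  exact main u hre hnR hne

lemma reach_other (hs : Inv E root s) {u : V} (hu : u ∉ s.P) (ha : s.anch u ≠ s.anch u1) :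
    Relation.ReflTransGen
      (fun a b => E a b ∧ b ∉ (elemSt E s u1 q1 q2).P ∧
        (elemSt E s u1 q1 q2).anch b = s.anch u)
      (s.anch u) u := by
  have hre := hs.reach u hu
  have main : ∀ x : V,
      Relation.ReflTransGen (fun a b => E a b ∧ b ∉ s.P ∧ s.anch b = s.anch u)
        (s.anch u) x →
      Relation.ReflTransGen
        (fun a b => E a b ∧ b ∉ (elemSt E s u1 q1 q2).P ∧
          (elemSt E s u1 q1 q2).anch b = s.anch u)
        (s.anch u) x := by
    intro x hx
    induction hx with
    | refl => exact Relation.ReflTransGen.refl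
    | tail hpre hstep ih =>
      rename_i b c
      have hcne : c ≠ u1 := by
        intro h
        exact ha (by rw [← hstep.2.2, h])
      have hcnR : c ∉ Rset E s u1 := by
        intro hR
        exact ha (by rw [← hstep.2.2, (Rset_spec hR).2.2])
      have hcP' : c ∉ (elemSt E s u1 q1 q2).P := by
        rw [elem_P_iff]; push_neg; exact ⟨hcne, hstep.2.1⟩
      exact ih.tail ⟨hstep.1, hcP', by rw [elem_anch_nR hcnR, hstep.2.2]⟩
  exact main u hre


theorem elem_inv (hs : Inv E root s) (hirr : ∀ v : V, ¬ E v v) (h1 : u1 ∉ s.P)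
    (hEa : E (s.anch u1) u1) (hq1 : s.rho (s.anch u1) < q1) (h12 : q1 < q2)
    (hq2 : q2 < s.hi (s.anch u1)) : Inv E root (elemSt E s u1 q1 q2) := by
  have hm : s.anch u1 ∈ s.P := mMem hs h1
  have hmne : s.anch u1 ≠ u1 := mNe hs h1
  have hext : Ext s (elemSt E s u1 q1 q2) := elem_ext h1
  have hrlo : s.lo (s.anch u1) ≤ s.rho (s.anch u1) := hs.rhoLo u1 h1
  have hPne : ∀ v ∈ s.P, v ≠ u1 := fun v hv h => h1 (h ▸ hv)
  constructor
  case rootMem => exact Set.mem_insert_iff.2 (Or.inr hs.rootMem)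
  case parMem =>
    intro v hv hvr
    rcases elem_P_iff.1 hv with h | h
    · rw [h, elem_par_new]; exact elem_P_iff.2 (Or.inr hm)
    · rw [elem_par_old (hPne v h)]
      exact elem_P_iff.2 (Or.inr (hs.parMem v h hvr))
  case parE =>
    intro v hv hvr
    rcases elem_P_iff.1 hv with h | h
    · rw [h, elem_par_new]; exact hEa
    · rw [elem_par_old (hPne v h)]; exact hs.parE v h hvr
  case nestLo =>
    intro v hv hvr
    rcases elem_P_iff.1 hv with h | h
    · rw [h, elem_par_new, elem_lo_new, elem_lo_old hmne]
      exact lt_of_le_of_lt hrlo hq1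
    · have hne := hPne v h
      have hpne : s.par v ≠ u1 := hPne _ (hs.parMem v h hvr)
      rw [elem_par_old hne, elem_lo_old hne, elem_lo_old hpne]
      exact hs.nestLo v h hvr
  case nestHi =>
    intro v hv hvr
    rcases elem_P_iff.1 hv with h | h
    · rw [h, elem_par_new, elem_hi_new, elem_hi_old hmne]; exact hq2
    · have hne := hPne v h
      have hpne : s.par v ≠ u1 := hPne _ (hs.parMem v h hvr)
      rw [elem_par_old hne, elem_hi_old hne, elem_hi_old hpne]
      exact hs.nestHi v h hvr
  case lohi =>
    intro v hv
    rcases elem_P_iff.1 hv with h | h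
    · rw [h, elem_lo_new, elem_hi_new]; exact h12
    · rw [elem_lo_old (hPne v h), elem_hi_old (hPne v h)]; exact hs.lohi v h
  case disj =>
    intro u hu v hv hnuv hnvu
    rcases elem_P_iff.1 hu with hu' | hu' <;> rcases elem_P_iff.1 hv with hv' | hv'
    · rw [hu', hv'] at hnuv
      exact absurd Relation.ReflTransGen.refl hnuv
    · rw [hu'] at hnvu ⊢
      have hvne := hPne v hv'
      rcases hs.T2 u1 h1 v hv' with hA | hle | hle
      · exact absurd (anc_new hs h1 hA) hnvu
      · right; rw [elem_hi_old hvne, elem_lo_new]; exact lt_of_le_of_lt hle hq1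
      · left; rw [elem_hi_new, elem_lo_old hvne]; exact lt_of_lt_of_le hq2 hle
    · rw [hv'] at hnuv ⊢
      have hune := hPne u hu'
      rcases hs.T2 u1 h1 u hu' with hA | hle | hle
      · exact absurd (anc_new hs h1 hA) hnuv
      · left; rw [elem_hi_old hune, elem_lo_new]; exact lt_of_le_of_lt hle hq1
      · right; rw [elem_hi_new, elem_lo_old hune]; exact lt_of_lt_of_le hq2 hle
    · have h1' : ¬ Anc root s u v := fun h => hnuv (hext.anc h)
      have h2' : ¬ Anc root s v u := fun h => hnvu (hext.anc h)
      rw [elem_hi_old (hPne u hu'), elem_lo_old (hPne v hv'),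
        elem_hi_old (hPne v hv'), elem_lo_old (hPne u hu')]
      exact hs.disj u hu' v hv' h1' h2'
  case K =>
    intro u hu v hv hEuv
    rcases elem_P_iff.1 hu with hu' | hu' <;> rcases elem_P_iff.1 hv with hv' | hv'
    · rw [hu', hv'] at hEuv; exact absurd hEuv (hirr u1)
    · rw [hu'] at hEuv ⊢
      have hvne := hPne v hv'
      rcases hs.K5 u1 h1 v hv' hEuv with hA | hle
      · exact Or.inr (Or.inl (anc_new hs h1 hA))
      · right; right; rw [elem_hi_old hvne, elem_lo_new]; exact lt_of_le_of_lt hle hq1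
    · rw [hv'] at hEuv ⊢
      have hune := hPne u hu'
      rcases hs.K4 u1 h1 u hu' hEuv with hA | hle
      · exact Or.inl (anc_new hs h1 hA)
      · right; right; rw [elem_hi_new, elem_lo_old hune]; exact lt_of_lt_of_le hq2 hle
    · rcases hs.K u hu' v hv' hEuv with h | h | h
      · exact Or.inl (hext.anc h)
      · exact Or.inr (Or.inl (hext.anc h))
      · right; right
        rw [elem_hi_old (hPne v hv'), elem_lo_old (hPne u hu')]; exact h
  case childRho =>
    intro v hv hvr
    rcases elem_P_iff.1 hv with h | h
    · rw [h, elem_hi_new, elem_par_new, elem_rho_m hmne]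
    · have hvne := hPne v h
      have hpne : s.par v ≠ u1 := hPne _ (hs.parMem v h hvr)
      rw [elem_hi_old hvne, elem_par_old hvne]
      by_cases hpm : s.par v = s.anch u1
      · rw [hpm, elem_rho_m hmne]
        have hcr := hs.childRho v h hvr
        rw [hpm] at hcr
        exact hcr.trans (lt_trans hq1 h12).le
      · rw [elem_rho_old hpne hpm]; exact hs.childRho v h hvr
  case anchMem =>
    intro u hu
    by_cases hR : u ∈ Rset E s u1
    · rw [elem_anch_R hR]; exact Set.mem_insert _ _
    · rw [elem_anch_nR hR]
      refine elem_P_iff.2 (Or.inr (hs.anchMem u ?_))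
      exact fun hP => hu (elem_P_iff.2 (Or.inr hP))
  case rhoLo =>
    intro u hu
    have huP : u ∉ s.P := fun h => hu (elem_P_iff.2 (Or.inr h))
    by_cases hR : u ∈ Rset E s u1
    · rw [elem_anch_R hR, elem_lo_new, elem_rho_new]
    · rw [elem_anch_nR hR]
      have hane : s.anch u ≠ u1 := hPne _ (hs.anchMem u huP)
      rw [elem_lo_old hane]
      by_cases ham : s.anch u = s.anch u1
      · rw [ham, elem_rho_m hmne]
        exact hrlo.trans (lt_trans hq1 h12).le
      · rw [elem_rho_old hane ham]; exact hs.rhoLo u huP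
  case rhoHi =>
    intro u hu
    have huP : u ∉ s.P := fun h => hu (elem_P_iff.2 (Or.inr h))
    by_cases hR : u ∈ Rset E s u1
    · rw [elem_anch_R hR, elem_rho_new, elem_hi_new]; exact h12
    · rw [elem_anch_nR hR]
      have hane : s.anch u ≠ u1 := hPne _ (hs.anchMem u huP)
      rw [elem_hi_old hane]
      by_cases ham : s.anch u = s.anch u1
      · rw [ham, elem_rho_m hmne]; exact hq2
      · rw [elem_rho_old hane ham]; exact hs.rhoHi u huP
  case reach =>
    intro u hu
    have huP : u ∉ s.P := fun h => hu (elem_P_iff.2 (Or.inr h))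
    have hune : u ≠ u1 := fun h => hu (elem_P_iff.2 (Or.inl h))
    by_cases hR : u ∈ Rset E s u1
    · rw [elem_anch_R (q1 := q1) (q2 := q2) hR]
      exact reach_R u hR.1
    · rw [elem_anch_nR (q1 := q1) (q2 := q2) hR]
      by_cases ham : s.anch u = s.anch u1
      · rw [ham]; exact reach_resid hs huP ham hR hune
      · exact reach_other hs huP ham
  case K4 =>
    intro u hu z hz hEzu
    have huP : u ∉ s.P := fun h => hu (elem_P_iff.2 (Or.inr h))
    have hune : u ≠ u1 := fun h => hu (elem_P_iff.2 (Or.inl h))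
    rcases elem_P_iff.1 hz with hz1 | hzo
    · rw [hz1] at hEzu ⊢
      by_cases hR : u ∈ Rset E s u1
      · left; rw [elem_anch_R hR]; exact Relation.ReflTransGen.refl
      · by_cases ham : s.anch u = s.anch u1
        · exact absurd ⟨Relation.ReflTransGen.single ⟨hEzu, huP, hune, ham⟩, hune⟩ hR
        · have h7 := hs.K7 u1 h1 u huP (fun h => ham h.symm) hEzu
          right
          rw [elem_anch_nR hR, elem_hi_old (hPne _ (hs.anchMem u huP)), elem_lo_new]
          exact h7.trans hq1.le
    · have hzne := hPne z hzo
      by_cases hR : u ∈ Rset E s u1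
      · have hspec := Rset_spec hR
        rcases hs.K4 u hspec.1 z hzo hEzu with hA | hle
        · left; rw [elem_anch_R hR]
          exact anc_new hs h1 (by rw [← hspec.2.2]; exact hA)
        · right; rw [elem_anch_R hR, elem_hi_new, elem_lo_old hzne]
          have hle' : s.hi (s.anch u1) ≤ s.lo z := by rw [← hspec.2.2]; exact hle
          exact (hq2.trans_le hle').le
      · rcases hs.K4 u huP z hzo hEzu with hA | hle
        · left; rw [elem_anch_nR hR]; exact hext.anc hA
        · right
          rw [elem_anch_nR hR, elem_hi_old (hPne _ (hs.anchMem u huP)), elem_lo_old hzne]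
          exact hle
  case K5 =>
    intro u hu z hz hEuz
    have huP : u ∉ s.P := fun h => hu (elem_P_iff.2 (Or.inr h))
    rcases elem_P_iff.1 hz with hz1 | hzo
    · rw [hz1] at hEuz ⊢
      by_cases hR : u ∈ Rset E s u1
      · left; rw [elem_anch_R hR]; exact Relation.ReflTransGen.refl
      · by_cases ham : s.anch u = s.anch u1
        · right; rw [elem_anch_nR hR, ham, elem_hi_new, elem_rho_m hmne]
        · right
          have h7 := hs.K7 u huP u1 h1 ham hEuz
          rw [elem_anch_nR hR, elem_hi_new,
            elem_rho_old (hPne _ (hs.anchMem u huP)) ham]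
          exact hq2.le.trans h7
    · have hzne := hPne z hzo
      by_cases hR : u ∈ Rset E s u1
      · have hspec := Rset_spec hR
        rcases hs.K5 u hspec.1 z hzo hEuz with hA | hle
        · left; rw [elem_anch_R hR]
          exact anc_new hs h1 (by rw [← hspec.2.2]; exact hA)
        · right; rw [elem_anch_R hR, elem_hi_old hzne, elem_rho_new]
          have hle' : s.hi z ≤ s.rho (s.anch u1) := by rw [← hspec.2.2]; exact hle
          exact hle'.trans hq1.le
      · rcases hs.K5 u huP z hzo hEuz with hA | hle
        · left; rw [elem_anch_nR hR]; exact hext.anc hA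
        · right; rw [elem_anch_nR hR, elem_hi_old hzne]
          by_cases ham : s.anch u = s.anch u1
          · rw [ham, elem_rho_m hmne]
            have hle' : s.hi z ≤ s.rho (s.anch u1) := by rw [← ham]; exact hle
            exact hle'.trans (lt_trans hq1 h12).le
          · rw [elem_rho_old (hPne _ (hs.anchMem u huP)) ham]; exact hle
  case K7 =>
    intro u hu u' hu' hne hEuu'
    have huP : u ∉ s.P := fun h => hu (elem_P_iff.2 (Or.inr h))
    have hune : u ≠ u1 := fun h => hu (elem_P_iff.2 (Or.inl h))
    have hu'P : u' ∉ s.P := fun h => hu' (elem_P_iff.2 (Or.inr h))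
    have hu'ne : u' ≠ u1 := fun h => hu' (elem_P_iff.2 (Or.inl h))
    by_cases hR : u ∈ Rset E s u1 <;> by_cases hR' : u' ∈ Rset E s u1
    · exfalso
      rw [elem_anch_R hR, elem_anch_R hR'] at hne
      exact hne rfl
    · have hspec := Rset_spec hR
      by_cases ham : s.anch u' = s.anch u1
      · exact absurd ⟨hR.1.tail ⟨hEuu', hu'P, hu'ne, ham⟩, hu'ne⟩ hR'
      · have h7 := hs.K7 u hspec.1 u' hu'P
          (by rw [hspec.2.2]; exact fun h => ham h.symm) hEuu'
        rw [elem_anch_R hR, elem_anch_nR hR',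
          elem_hi_old (hPne _ (hs.anchMem u' hu'P)), elem_rho_new]
        have h7' : s.hi (s.anch u') ≤ s.rho (s.anch u1) := by rw [← hspec.2.2]; exact h7
        exact h7'.trans hq1.le
    · have hspec' := Rset_spec hR'
      rw [elem_anch_nR hR, elem_anch_R hR', elem_hi_new]
      by_cases ham : s.anch u = s.anch u1
      · rw [ham, elem_rho_m hmne]
      · have h7 := hs.K7 u huP u' hspec'.1
          (by rw [hspec'.2.2]; exact ham) hEuu'
        rw [hspec'.2.2] at h7
        rw [elem_rho_old (hPne _ (hs.anchMem u huP)) ham]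
        exact (hq2.trans_le h7).le
    · rw [elem_anch_nR hR, elem_anch_nR hR'] at hne ⊢
      have h7 := hs.K7 u huP u' hu'P hne hEuu'
      have hane := hPne _ (hs.anchMem u huP)
      have ha'ne := hPne _ (hs.anchMem u' hu'P)
      rw [elem_hi_old ha'ne]
      by_cases ham : s.anch u = s.anch u1
      · rw [ham, elem_rho_m hmne]
        have h7' : s.hi (s.anch u') ≤ s.rho (s.anch u1) := by rw [← ham]; exact h7
        exact h7'.trans (lt_trans hq1 h12).le
      · rw [elem_rho_old hane ham]; exact h7
  case T2 =>
    intro u hu z hz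
    have huP : u ∉ s.P := fun h => hu (elem_P_iff.2 (Or.inr h))
    rcases elem_P_iff.1 hz with hz1 | hzo
    · rw [hz1]
      by_cases hR : u ∈ Rset E s u1
      · left; rw [elem_anch_R hR]; exact Relation.ReflTransGen.refl
      · by_cases ham : s.anch u = s.anch u1
        · right; left; rw [elem_anch_nR hR, ham, elem_hi_new, elem_rho_m hmne]
        · rcases hs.T2 u huP (s.anch u1) hm with hA | hle | hle
          · right; right
            rcases hA.cases_head with heq | ⟨c, hTr, hAnc⟩
            · exact absurd heq.symm ham
            · have hcr := hs.childRho c hTr.1 hTr.2.1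
              rw [hTr.2.2] at hcr
              have hh := (anc_lohi hs hAnc).2
              rw [elem_anch_nR hR, elem_hi_old (hPne _ (hs.anchMem u huP)), elem_lo_new]
              exact (hh.trans hcr).trans hq1.le
          · right; left
            rw [elem_anch_nR hR, elem_hi_new,
              elem_rho_old (hPne _ (hs.anchMem u huP)) ham]
            exact (hq2.trans_le hle).le
          · right; right
            rw [elem_anch_nR hR, elem_hi_old (hPne _ (hs.anchMem u huP)), elem_lo_new]
            exact hle.trans (hrlo.trans hq1.le)
    · have hzne := hPne z hzo
      by_cases hR : u ∈ Rset E s u1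
      · have hspec := Rset_spec hR
        rcases hs.T2 u hspec.1 z hzo with hA | hle | hle
        · left; rw [elem_anch_R hR]
          exact anc_new hs h1 (by rw [← hspec.2.2]; exact hA)
        · right; left; rw [elem_anch_R hR, elem_hi_old hzne, elem_rho_new]
          have hle' : s.hi z ≤ s.rho (s.anch u1) := by rw [← hspec.2.2]; exact hle
          exact hle'.trans hq1.le
        · right; right; rw [elem_anch_R hR, elem_hi_new, elem_lo_old hzne]
          have hle' : s.hi (s.anch u1) ≤ s.lo z := by rw [← hspec.2.2]; exact hle
          exact (hq2.trans_le hle').le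
      · rcases hs.T2 u huP z hzo with hA | hle | hle
        · left; rw [elem_anch_nR hR]; exact hext.anc hA
        · right; left
          rw [elem_anch_nR hR, elem_hi_old hzne]
          by_cases ham : s.anch u = s.anch u1
          · rw [ham, elem_rho_m hmne]
            have hle' : s.hi z ≤ s.rho (s.anch u1) := by rw [← ham]; exact hle
            exact hle'.trans (lt_trans hq1 h12).le
          · rw [elem_rho_old (hPne _ (hs.anchMem u huP)) ham]; exact hle
        · right; right
          rw [elem_anch_nR hR, elem_hi_old (hPne _ (hs.anchMem u huP)),
            elem_lo_old hzne]
          exact hle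
  case rootAnc =>
    intro v hv
    rcases elem_P_iff.1 hv with h | h
    · rw [h]; exact anc_new hs h1 (hs.rootAnc _ hm)
    · exact hext.anc (hs.rootAnc v h)


end Elem


/-! ## Bounded-length reachability and the target-placing step -/

section Step

def RN (Q : V → V → Prop) : ℕ → V → V → Prop
  | 0 => Eq
  | n+1 => fun a b => ∃ c, Q a c ∧ RN Q n c b

lemma RN_zero {Q : V → V → Prop} {a b : V} : RN Q 0 a b ↔ a = b := Iff.rfl

lemma RN_succ {Q : V → V → Prop} {n : ℕ} {a b : V} :
    RN Q (n + 1) a b ↔ ∃ c, Q a c ∧ RN Q n c b := Iff.rfl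

lemma RN.snoc {Q : V → V → Prop} :
    ∀ {n : ℕ} {a b c : V}, RN Q n a b → Q b c → RN Q (n + 1) a c := by
  intro n
  induction n with
  | zero =>
    intro a b c h hq
    exact ⟨c, (RN_zero.1 h) ▸ hq, rfl⟩
  | succ n ih =>
    intro a b c h hq
    obtain ⟨d, h1, h2⟩ := RN_succ.1 h
    exact ⟨d, h1, ih h2 hq⟩

lemma rtg_rn {Q : V → V → Prop} {a b : V} (h : Relation.ReflTransGen Q a b) :
    ∃ n, RN Q n a b := by
  induction h with
  | refl => exact ⟨0, rfl⟩
  | tail _ hst ih =>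
    obtain ⟨n, hn⟩ := ih
    exact ⟨n + 1, hn.snoc hst⟩

lemma RN.last {Q : V → V → Prop} {C : V → Prop} (hC : ∀ x y, Q x y → C y) :
    ∀ {n : ℕ} {a b : V}, RN Q n a b → a = b ∨ C b := by
  intro n
  induction n with
  | zero => intro a b h; exact Or.inl (RN_zero.1 h)
  | succ n ih =>
    intro a b h
    obtain ⟨c, h1, h2⟩ := RN_succ.1 h
    rcases ih h2 with rfl | hc
    · exact Or.inr (hC _ _ h1)
    · exact Or.inr hc

lemma step_aux (hirr : ∀ v : V, ¬ E v v) :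
    ∀ n : ℕ, ∀ s : St V, Inv E root s → ∀ w, w ∉ s.P →
      RN (fun a b => E a b ∧ b ∉ s.P ∧ s.anch b = s.anch w) n (s.anch w) w →
      ∃ t : St V, Inv E root t ∧ Ext s t ∧ w ∈ t.P := by
  intro n
  induction n using Nat.strong_induction_on with
  | _ n IH =>
  intro s hs w hw hn
  have hex : ∃ m, RN (fun a b => E a b ∧ b ∉ s.P ∧ s.anch b = s.anch w) m (s.anch w) w :=
    ⟨n, hn⟩
  have hdspec := Nat.find_spec hex
  have hdle : Nat.find hex ≤ n := Nat.find_le hn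
  have hd1 : Nat.find hex ≠ 0 := by
    intro h
    rw [h] at hdspec
    exact hw ((RN_zero.1 hdspec) ▸ hs.anchMem w hw)
  obtain ⟨k, hk⟩ : ∃ k, Nat.find hex = k + 1 :=
    ⟨Nat.find hex - 1, (Nat.succ_pred_eq_of_ne_zero hd1).symm⟩
  rw [hk] at hdspec
  obtain ⟨u1, hQ1, htail⟩ := RN_succ.1 hdspec
  have hu1P : u1 ∉ s.P := hQ1.2.1
  have hanch : s.anch u1 = s.anch w := hQ1.2.2
  have hEu1 : E (s.anch u1) u1 := by rw [hanch]; exact hQ1.1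
  obtain ⟨x, hx1, hx2⟩ := exists_between (hs.rhoHi u1 hu1P)
  obtain ⟨y, hy1, hy2⟩ := exists_between hx2
  have hinv' := elem_inv (q1 := x) (q2 := y) hs hirr hu1P hEu1 hx1 hy1 hy2
  have hext' : Ext s (elemSt E s u1 x y) := elem_ext hu1P
  by_cases hwP : w ∈ (elemSt E s u1 x y).P
  · exact ⟨_, hinv', hext', hwP⟩
  · have hwne : w ≠ u1 := fun h => hwP (h ▸ Set.mem_insert _ _)
    have claim : ∀ k' : ℕ, ∀ x' j, RN (fun a b => E a b ∧ b ∉ s.P ∧ s.anch b = s.anch w) j u1 x' →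
        Relation.ReflTransGen (QR E s u1) u1 x' →
        RN (fun a b => E a b ∧ b ∉ s.P ∧ s.anch b = s.anch w) k' x' w → j + k' = k →
        RN (fun a b => E a b ∧ b ∉ (elemSt E s u1 x y).P ∧
          (elemSt E s u1 x y).anch b = u1) k' x' w := by
      intro k'
      induction k' with
      | zero => intro x' j _ _ h _; exact h
      | succ k' ihk =>
        intro x' j hj hQRx hk' hsum
        obtain ⟨c, hxc, hcw⟩ := RN_succ.1 hk'
        by_cases hcu : c = u1
        · exfalso
          have h0 : RN (fun a b => E a b ∧ b ∉ s.P ∧ s.anch b = s.anch w) (k' + 1)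
              (s.anch w) w := ⟨u1, hQ1, by rw [← hcu]; exact hcw⟩
          rcases Nat.eq_zero_or_pos j with hj0 | hjpos
          · rw [hj0] at hj
            have hx'eq : u1 = x' := RN_zero.1 hj
            rw [← hx'eq, hcu] at hxc
            exact hirr u1 hxc.1
          · have hlt : k' + 1 < Nat.find hex := by omega
            exact Nat.find_min hex hlt h0
        · have hcR : c ∈ Rset E s u1 :=
            ⟨hQRx.tail ⟨hxc.1, hxc.2.1, hcu, by rw [hxc.2.2, hanch]⟩, hcu⟩
          have hcP' : c ∉ (elemSt E s u1 x y).P := by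
            rw [elem_P_iff]; push_neg; exact ⟨hcu, hxc.2.1⟩
          refine RN_succ.2 ⟨c, ⟨hxc.1, hcP', elem_anch_R hcR⟩, ?_⟩
          exact ihk c (j + 1) (hj.snoc hxc) hcR.1 hcw (by omega)
    have hmain := claim k u1 0 rfl Relation.ReflTransGen.refl htail (by omega)
    have hk0 : k ≠ 0 := by
      intro h
      rw [h] at htail
      exact hwne (RN_zero.1 htail).symm
    have hwcond : w ∉ (elemSt E s u1 x y).P ∧ (elemSt E s u1 x y).anch w = u1 := by
      have := RN.last (Q := fun a b => E a b ∧ b ∉ (elemSt E s u1 x y).P ∧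
          (elemSt E s u1 x y).anch b = u1) (C := fun b => b ∉ (elemSt E s u1 x y).P ∧
          (elemSt E s u1 x y).anch b = u1) (fun _ _ h => ⟨h.2.1, h.2.2⟩) hmain
      rcases this with heq | hc
      · exact absurd heq.symm hwne
      · exact hc
    have hrn' : RN (fun a b => E a b ∧ b ∉ (elemSt E s u1 x y).P ∧
        (elemSt E s u1 x y).anch b = (elemSt E s u1 x y).anch w) k
        ((elemSt E s u1 x y).anch w) w := by
      rw [hwcond.2]; exact hmain
    obtain ⟨t, ht1, ht2, ht3⟩ := IH k (by omega) _ hinv' w hwP hrn'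
    exact ⟨t, ht1, hext'.trans ht2, ht3⟩

lemma step_ex (hirr : ∀ v : V, ¬ E v v) (s : St V) (hs : Inv E root s) (w : V) :
    ∃ t : St V, Inv E root t ∧ Ext s t ∧ w ∈ t.P := by
  by_cases hw : w ∈ s.P
  · exact ⟨s, hs, Ext.refl s, hw⟩
  · obtain ⟨n, hn⟩ := rtg_rn (hs.reach w hw)
    exact step_aux hirr n s hs w hw hn

end Step



/-! ## The limit construction -/

section Limit

variable (hirr : ∀ v : V, ¬ E v v) (hreach : ∀ v : V, Relation.ReflTransGen E root v)
  (e : ℕ → V) (he : Function.Surjective e)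

noncomputable def seqS : ℕ → {s : St V // Inv E root s}
  | 0 => ⟨initSt root, init_inv hirr hreach⟩
  | n+1 =>
    ⟨(step_ex hirr (seqS n).1 (seqS n).2 (e n)).choose,
     ((step_ex hirr (seqS n).1 (seqS n).2 (e n)).choose_spec).1⟩

noncomputable def stg (n : ℕ) : St V := (seqS hirr hreach e n).1

lemma stg_inv (n : ℕ) : Inv E root (stg hirr hreach e n) := (seqS hirr hreach e n).2

lemma stg_ext (n : ℕ) : Ext (stg hirr hreach e n) (stg hirr hreach e (n+1)) :=
  ((step_ex hirr (seqS hirr hreach e n).1 (seqS hirr hreach e n).2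
    (e n)).choose_spec).2.1

lemma stg_mem (n : ℕ) : e n ∈ (stg hirr hreach e (n+1)).P :=
  ((step_ex hirr (seqS hirr hreach e n).1 (seqS hirr hreach e n).2
    (e n)).choose_spec).2.2

lemma stg_le {m n : ℕ} (h : m ≤ n) :
    Ext (stg hirr hreach e m) (stg hirr hreach e n) := by
  induction h with
  | refl => exact Ext.refl _
  | step _ ih => exact ih.trans (stg_ext hirr hreach e _)

noncomputable def idx (v : V) : ℕ := (he v).choose + 1

lemma idx_mem (v : V) : v ∈ (stg hirr hreach e (idx e he v)).P := by
  have h : e ((he v).choose) = v := (he v).choose_spec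
  have h2 := stg_mem hirr hreach e ((he v).choose)
  rwa [h] at h2

noncomputable def parL (v : V) : V := (stg hirr hreach e (idx e he v)).par v
noncomputable def loL (v : V) : ℚ := (stg hirr hreach e (idx e he v)).lo v
noncomputable def hiL (v : V) : ℚ := (stg hirr hreach e (idx e he v)).hi v

lemma stabL (v : V) (n : ℕ) (hv : v ∈ (stg hirr hreach e n).P) :
    (stg hirr hreach e n).par v = parL hirr hreach e he v ∧
    (stg hirr hreach e n).lo v = loL hirr hreach e he v ∧
    (stg hirr hreach e n).hi v = hiL hirr hreach e he v := by
  rcases le_total n (idx e he v) with h | h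
  · obtain ⟨a, b, c⟩ := (stg_le hirr hreach e h).2 v hv
    exact ⟨a.symm, b.symm, c.symm⟩
  · obtain ⟨a, b, c⟩ := (stg_le hirr hreach e h).2 v (idx_mem hirr hreach e he v)
    exact ⟨a, b, c⟩

def TL : V → V → Prop := fun a b => b ≠ root ∧ parL hirr hreach e he b = a

lemma tr_to_TL {n : ℕ} {a b : V} (h : Tr root (stg hirr hreach e n) a b) :
    TL hirr hreach e he a b := by
  refine ⟨h.2.1, ?_⟩
  rw [← (stabL hirr hreach e he b n h.1).1]
  exact h.2.2

lemma anc_to_TL {n : ℕ} {a b : V} (h : Anc root (stg hirr hreach e n) a b) :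
    Relation.ReflTransGen (TL hirr hreach e he) a b :=
  Relation.ReflTransGen.mono (r := Tr root (stg hirr hreach e n)) (p := TL hirr hreach e he)
    (fun _ _ hx => tr_to_TL hirr hreach e he hx) _ _ h

lemma TL_chain_to_anc {n : ℕ} {x y : V}
    (h : Relation.ReflTransGen (TL hirr hreach e he) x y)
    (hy : y ∈ (stg hirr hreach e n).P) :
    Anc root (stg hirr hreach e n) x y ∧ x ∈ (stg hirr hreach e n).P := by
  induction h with
  | refl => exact ⟨Relation.ReflTransGen.refl, hy⟩
  | tail hxc hcy ih =>
    rename_i c y'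
    have hTr : Tr root (stg hirr hreach e n) c y' :=
      ⟨hy, hcy.1, by rw [(stabL hirr hreach e he y' n hy).1, hcy.2]⟩
    have hcP : c ∈ (stg hirr hreach e n).P := by
      have h2 := (stg_inv hirr hreach e n).parMem y' hy hcy.1
      rwa [(stabL hirr hreach e he y' n hy).1, hcy.2] at h2
    obtain ⟨ih1, ih2⟩ := ih hcP
    exact ⟨ih1.tail hTr, ih2⟩

lemma TL_cmp : ∀ b c : V, Relation.ReflTransGen (TL hirr hreach e he) b c →
    ∀ a, Relation.ReflTransGen (TL hirr hreach e he) a c →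
    Relation.ReflTransGen (TL hirr hreach e he) a b ∨
    Relation.ReflTransGen (TL hirr hreach e he) b a := by
  intro b c hbc
  induction hbc with
  | refl => intro a hac; exact Or.inl hac
  | tail hbm hmc ih =>
    intro a hac
    rcases hac.cases_tail with heq | ⟨d, had, hdc⟩
    · exact Or.inr (heq ▸ (hbm.tail hmc))
    · have hdm : d = _ := hdc.2.symm.trans hmc.2
      exact ih a (hdm ▸ had)

lemma TL_key : ∀ a b : V, NormalAssistant E (TL hirr hreach e he) a b →
    hiL hirr hreach e he b < hiL hirr hreach e he a := by
  intro a b hab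
  rcases hab with hT | ⟨hnab, hnba, v', w', hav', hbw', hE'⟩
  · -- tree edge
    have hvb := idx_mem hirr hreach e he b
    have h1 := (stg_inv hirr hreach e (idx e he b)).nestHi b hvb hT.1
    have hpmem := (stg_inv hirr hreach e (idx e he b)).parMem b hvb hT.1
    rw [(stabL hirr hreach e he b _ hvb).2.2] at h1
    rw [(stabL hirr hreach e he _ _ hpmem).2.2] at h1
    rw [(stabL hirr hreach e he b _ hvb).1, hT.2] at h1
    exact h1
  · -- jump edge
    set n := max (idx e he v') (idx e he w') with hn
    have hv'P : v' ∈ (stg hirr hreach e n).P :=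
      (stg_le hirr hreach e (le_max_left _ _)).1 (idx_mem hirr hreach e he v')
    have hw'P : w' ∈ (stg hirr hreach e n).P :=
      (stg_le hirr hreach e (le_max_right _ _)).1 (idx_mem hirr hreach e he w')
    obtain ⟨hAv, haP⟩ := TL_chain_to_anc hirr hreach e he hav' hv'P
    obtain ⟨hAw, hbP⟩ := TL_chain_to_anc hirr hreach e he hbw' hw'P
    rcases (stg_inv hirr hreach e n).K v' hv'P w' hw'P hE' with hc | hc | hlt
    · exfalso
      have h1 : Relation.ReflTransGen (TL hirr hreach e he) a w' :=
        hav'.trans (anc_to_TL hirr hreach e he hc)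
      rcases TL_cmp hirr hreach e he b w' hbw' a h1 with h | h
      · exact hnab h
      · exact hnba h
    · exfalso
      have h1 : Relation.ReflTransGen (TL hirr hreach e he) b v' :=
        hbw'.trans (anc_to_TL hirr hreach e he hc)
      rcases TL_cmp hirr hreach e he b v' h1 a hav' with h | h
      · exact hnab h
      · exact hnba h
    · have hnab' : ¬ Anc root (stg hirr hreach e n) a b :=
        fun h => hnab (anc_to_TL hirr hreach e he h)
      have hnba' : ¬ Anc root (stg hirr hreach e n) b a :=
        fun h => hnba (anc_to_TL hirr hreach e he h)
      have hdisj := (stg_inv hirr hreach e n).disj a haP b hbP hnab' hnba'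
      have h1 := anc_lohi (stg_inv hirr hreach e n) hAv
      have h2 := anc_lohi (stg_inv hirr hreach e n) hAw
      have hl1 := (stg_inv hirr hreach e n).lohi v' hv'P
      have hl2 := (stg_inv hirr hreach e n).lohi w' hw'P
      rcases hdisj with hd | hd
      · exfalso
        linarith [h1.1, h1.2, h2.1, h2.2]
      · have hla := (stg_inv hirr hreach e n).lohi a haP
        rw [← (stabL hirr hreach e he a n haP).2.2, ← (stabL hirr hreach e he b n hbP).2.2]
        linarith

end Limit


end NSA

theorem stmt_15 {V : Type*} [Countable V] (E : V → V → Prop)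
    (h_irr : ∀ v : V, ¬ E v v)
    (r : V) (h_reach : ∀ v : V, Relation.ReflTransGen E r v) :
    ∃ T : V → V → Prop, IsSpanningArborescence E T r ∧ IsNormal E T := by
  classical
  haveI : Nonempty V := ⟨r⟩
  obtain ⟨e, he⟩ := exists_surjective_nat V
  refine ⟨NSA.TL h_irr h_reach e he, ⟨?_, ?_, ?_, ?_⟩, ?_⟩
  · rintro u v ⟨hne, hpar⟩
    have hv := NSA.idx_mem h_irr h_reach e he v
    have h2 := (NSA.stg_inv h_irr h_reach e (NSA.idx e he v)).parE v hv hne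
    rw [(NSA.stabL h_irr h_reach e he v _ hv).1, hpar] at h2
    exact h2
  · rintro u ⟨hne, _⟩; exact hne rfl
  · intro v hv
    exact ⟨NSA.parL h_irr h_reach e he v, ⟨hv, rfl⟩, fun y hy => hy.2.symm⟩
  · intro v
    have h := (NSA.stg_inv h_irr h_reach e (NSA.idx e he v)).rootAnc v
      (NSA.idx_mem h_irr h_reach e he v)
    exact NSA.anc_to_TL h_irr h_reach e he h
  · intro x hx
    have hkey : ∀ a b : V,
        Relation.TransGen (NormalAssistant E (NSA.TL h_irr h_reach e he)) a b →
        NSA.hiL h_irr h_reach e he b < NSA.hiL h_irr h_reach e he a := by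
      intro a b h
      induction h with
      | single h => exact NSA.TL_key h_irr h_reach e he _ _ h
      | tail _ h2 ih => exact lt_trans (NSA.TL_key h_irr h_reach e he _ _ h2) ih
    exact lt_irrefl _ (hkey x x hx)
end
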